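/- arXiv:0901.3887 — 8 statements merged into one kernel-verified Lean document; each statement's English description precedes it below -/
import Mathlib

section
/- Let g>0, H>0, 0<l<1 and u₁≠u₂ be real numbers, and let the interface velocity u be equal to either u₁ or u₂. Then the characteristic polynomial D(x) = −x(2u₁−u−x)(2u₂−u−x) − l(2u₂−u−x)(gH−u₁²+ux) − (1−l)(2u₁−u−x)(gH−u₂²+ux) has three distinct real roots; consequently the two-layer multilayer Saint-Venant system is strictly hyperbolic when the total water height is strictly positive. -/
private lemma cubic_neg_large (b₂ b₁ b₀ y : ℝ) (hy : 1 + |b₂| + |b₁| + |b₀| ≤ y) :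
    -y ^ 3 + b₂ * y ^ 2 + b₁ * y + b₀ < 0 := by
  have h2 : b₂ ≤ |b₂| := le_abs_self _
  have h1 : b₁ ≤ |b₁| := le_abs_self _
  have h0 : b₀ ≤ |b₀| := le_abs_self _
  have a2 : (0:ℝ) ≤ |b₂| := abs_nonneg _
  have a1 : (0:ℝ) ≤ |b₁| := abs_nonneg _
  have a0 : (0:ℝ) ≤ |b₀| := abs_nonneg _
  have hy1 : (1:ℝ) ≤ y := by linarith
  nlinarith [sq_nonneg y, sq_nonneg (y - 1), mul_le_mul_of_nonneg_left h2 (sq_nonneg y),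
    mul_le_mul_of_nonneg_left h1 (le_of_lt (lt_of_lt_of_le one_pos hy1)),
    mul_le_mul_of_nonneg_right (sub_nonneg.2 h2) (sq_nonneg y),
    mul_le_mul_of_nonneg_right (sub_nonneg.2 h1) (le_of_lt (lt_of_lt_of_le one_pos hy1))]

private lemma key_pos (a c l : ℝ) (ha : 0 < a) (hc : 0 < c) (hl0 : 0 < l) (hl1 : l < 1) :
    ∃ y₁ y₂ y₃ : ℝ, y₁ < y₂ ∧ y₂ < y₃ ∧ ∀ y ∈ ({y₁, y₂, y₃} : Set ℝ),
      (2 * a - y) * (y ^ 2 - l * c) + (1 - l) * (c - a ^ 2) * y = 0 := by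
  set f : ℝ → ℝ := fun y => (2 * a - y) * (y ^ 2 - l * c) + (1 - l) * (c - a ^ 2) * y with hf
  have hcont : Continuous f := by fun_prop
  obtain ⟨b₂, hb₂⟩ : ∃ b₂ : ℝ, b₂ = 2 * a := ⟨_, rfl⟩
  obtain ⟨b₁, hb₁⟩ : ∃ b₁ : ℝ, b₁ = l * c + (1 - l) * (c - a ^ 2) := ⟨_, rfl⟩
  obtain ⟨b₀, hb₀⟩ : ∃ b₀ : ℝ, b₀ = -(2 * a * (l * c)) := ⟨_, rfl⟩
  obtain ⟨R, hR⟩ : ∃ R : ℝ, R = 1 + |b₂| + |b₁| + |b₀| := ⟨_, rfl⟩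
  have a2 : (0:ℝ) ≤ |b₂| := abs_nonneg _
  have a1 : (0:ℝ) ≤ |b₁| := abs_nonneg _
  have a0 : (0:ℝ) ≤ |b₀| := abs_nonneg _
  have hfid : ∀ y, f y = -y ^ 3 + b₂ * y ^ 2 + b₁ * y + b₀ := fun y => by
    rw [hf, hb₂, hb₁, hb₀]; ring
  have hfR : f R < 0 := by
    rw [hfid]; exact cubic_neg_large b₂ b₁ b₀ R hR.ge
  have hfmR : 0 < f (-R) := by
    have h := cubic_neg_large (-b₂) b₁ (-b₀) R (by rw [abs_neg, abs_neg]; exact hR.ge)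
    have e : f (-R) = -(-R ^ 3 + -b₂ * R ^ 2 + b₁ * R + -b₀) := by rw [hfid]; ring
    rw [e]; linarith
  have hf0 : f 0 < 0 := by
    have e : f 0 = b₀ := by rw [hfid]; ring
    have : 0 < 2 * a * (l * c) := by positivity
    rw [e, hb₀]; linarith
  -- choose the middle positive point q
  obtain ⟨q, hq0, hqR, hfq⟩ : ∃ q : ℝ, 0 < q ∧ q < R ∧ 0 < f q := by
    rcases le_or_gt c (a ^ 2) with hca | hca
    · refine ⟨a, ha, ?_, ?_⟩
      · have hab : |b₂| = 2 * a := by rw [hb₂]; exact abs_of_pos (by linarith)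
        rw [hR, hab]; linarith
      · have hfa : f a = a * (l * (a ^ 2 - c) + (1 - l) * c) := by rw [hf]; ring
        rw [hfa]
        have h1 : 0 < l * (a ^ 2 - c) + (1 - l) * c := by nlinarith
        positivity
    · obtain ⟨s, hsdef⟩ : ∃ s : ℝ, s = Real.sqrt (l * c) := ⟨_, rfl⟩
      have hs2 : s ^ 2 = l * c := by rw [hsdef]; exact Real.sq_sqrt (by positivity)
      have hspos : 0 < s := by rw [hsdef]; exact Real.sqrt_pos.2 (by positivity)
      refine ⟨s, hspos, ?_, ?_⟩
      · have hb1pos : 0 < b₁ := by rw [hb₁]; nlinarith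
        have habs : |b₁| = b₁ := abs_of_pos hb1pos
        have hs2le : s ^ 2 ≤ b₁ := by rw [hb₁, hs2]; nlinarith
        have hlt : s < 1 + s ^ 2 := by nlinarith [sq_nonneg (s - 1)]
        rw [hR, habs]; linarith
      · have hfs : f s = (1 - l) * (c - a ^ 2) * s := by
          rw [hf]; simp only; rw [hs2]; ring
        rw [hfs]
        have h1 : (0:ℝ) < 1 - l := by linarith
        have h2 : (0:ℝ) < c - a ^ 2 := by linarith
        positivity
  have hmR0 : (-R : ℝ) ≤ 0 := by rw [hR]; linarith
  obtain ⟨y₁, hy₁, hfy₁⟩ : ∃ y ∈ Set.Ioo (-R) (0:ℝ), f y = 0 := by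
    obtain ⟨y, hy, hfy⟩ := intermediate_value_Ioo' hmR0 hcont.continuousOn
      (⟨hf0, hfmR⟩ : (0:ℝ) ∈ Set.Ioo (f 0) (f (-R)))
    exact ⟨y, hy, hfy⟩
  obtain ⟨y₂, hy₂, hfy₂⟩ : ∃ y ∈ Set.Ioo (0:ℝ) q, f y = 0 := by
    obtain ⟨y, hy, hfy⟩ := intermediate_value_Ioo hq0.le hcont.continuousOn
      (⟨hf0, hfq⟩ : (0:ℝ) ∈ Set.Ioo (f 0) (f q))
    exact ⟨y, hy, hfy⟩
  obtain ⟨y₃, hy₃, hfy₃⟩ : ∃ y ∈ Set.Ioo q R, f y = 0 := by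
    obtain ⟨y, hy, hfy⟩ := intermediate_value_Ioo' hqR.le hcont.continuousOn
      (⟨hfR, hfq⟩ : (0:ℝ) ∈ Set.Ioo (f R) (f q))
    exact ⟨y, hy, hfy⟩
  refine ⟨y₁, y₂, y₃, lt_trans hy₁.2 hy₂.1, lt_trans hy₂.2 hy₃.1, ?_⟩
  rintro y (rfl | rfl | rfl)
  · exact hfy₁
  · exact hfy₂
  · exact hfy₃

private lemma key (a c l : ℝ) (ha : a ≠ 0) (hc : 0 < c) (hl0 : 0 < l) (hl1 : l < 1) :
    ∃ y₁ y₂ y₃ : ℝ, y₁ < y₂ ∧ y₂ < y₃ ∧ ∀ y ∈ ({y₁, y₂, y₃} : Set ℝ),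
      (2 * a - y) * (y ^ 2 - l * c) + (1 - l) * (c - a ^ 2) * y = 0 := by
  rcases ha.lt_or_gt with hneg | hpos
  · obtain ⟨y₁, y₂, y₃, h12, h23, hroot⟩ := key_pos (-a) c l (by linarith) hc hl0 hl1
    refine ⟨-y₃, -y₂, -y₁, by linarith, by linarith, ?_⟩
    rintro y (rfl | rfl | rfl)
    · have h := hroot y₃ (by simp); linear_combination -h
    · have h := hroot y₂ (by simp); linear_combination -h
    · have h := hroot y₁ (by simp); linear_combination -h
  · exact key_pos a c l hpos hc hl0 hl1

/-- The characteristic polynomial of the two-layer multilayer Saint-Venant system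
has three distinct real roots, hence the system is strictly hyperbolic when the
total water height is strictly positive. -/
theorem two_layer_strict_hyperbolicity
    (g H l u₁ u₂ u : ℝ) (hg : 0 < g) (hH : 0 < H)
    (hl0 : 0 < l) (hl1 : l < 1) (hne : u₁ ≠ u₂)
    (hu : u = u₁ ∨ u = u₂) :
    ∃ x₁ x₂ x₃ : ℝ, x₁ ≠ x₂ ∧ x₁ ≠ x₃ ∧ x₂ ≠ x₃ ∧
      ∀ x ∈ ({x₁, x₂, x₃} : Set ℝ),
        -x * (2 * u₁ - u - x) * (2 * u₂ - u - x)
          - l * (2 * u₂ - u - x) * (g * H - u₁ ^ 2 + u * x)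
          - (1 - l) * (2 * u₁ - u - x) * (g * H - u₂ ^ 2 + u * x) = 0 := by
  have hgH : 0 < g * H := mul_pos hg hH
  rcases hu with rfl | rfl
  · obtain ⟨y₁, y₂, y₃, h12, h23, hroot⟩ :=
      key (u₂ - u) (g * H) l (sub_ne_zero.2 (Ne.symm hne)) hgH hl0 hl1
    refine ⟨u + y₁, u + y₂, u + y₃, by intro h; linarith [add_left_cancel h],
      by intro h; linarith [add_left_cancel h], by intro h; linarith [add_left_cancel h], ?_⟩
    rintro x (rfl | rfl | rfl)
    · have h := hroot y₁ (by simp); linear_combination h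
    · have h := hroot y₂ (by simp); linear_combination h
    · have h := hroot y₃ (by simp); linear_combination h
  · obtain ⟨y₁, y₂, y₃, h12, h23, hroot⟩ :=
      key (u₁ - u) (g * H) (1 - l) (sub_ne_zero.2 hne) hgH (by linarith) (by linarith)
    refine ⟨u + y₁, u + y₂, u + y₃, by intro h; linarith [add_left_cancel h],
      by intro h; linarith [add_left_cancel h], by intro h; linarith [add_left_cancel h], ?_⟩
    rintro x (rfl | rfl | rfl)
    · have h := hroot y₁ (by simp); linear_combination h
    · have h := hroot y₂ (by simp); linear_combination h
    · have h := hroot y₃ (by simp); linear_combination h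
end

section
/- Let g, H, l, u be real numbers and take equal layer velocities u₁ = u₂ = u and interface velocity u. Then the characteristic polynomial factorizes as D(x) = (u−x)((u−x)² − gH); in particular, if gH>0 its roots are the baroclinic eigenvalue u and the barotropic eigenvalues u+√(gH) and u−√(gH), and these three roots are pairwise distinct. -/
/-- With equal layer velocities `u₁ = u₂ = u` and interface velocity `u`, the
characteristic polynomial of the two-layer multilayer Saint-Venant system
factorizes as `D(x) = (u - x) * ((u - x)² - gH)`; if `gH > 0` its roots are
exactly `u`, `u + √(gH)` and `u - √(gH)`, which are pairwise distinct. -/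
theorem two_layer_char_poly_equal_velocities (g H l u : ℝ) :
    (∀ x : ℝ,
      -x * (2 * u - u - x) * (2 * u - u - x)
        - l * (2 * u - u - x) * (g * H - u ^ 2 + u * x)
        - (1 - l) * (2 * u - u - x) * (g * H - u ^ 2 + u * x)
      = (u - x) * ((u - x) ^ 2 - g * H)) ∧
    (0 < g * H →
      (∀ x : ℝ, (u - x) * ((u - x) ^ 2 - g * H) = 0 ↔
        x = u ∨ x = u + Real.sqrt (g * H) ∨ x = u - Real.sqrt (g * H)) ∧
      u ≠ u + Real.sqrt (g * H) ∧
      u ≠ u - Real.sqrt (g * H) ∧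
      u + Real.sqrt (g * H) ≠ u - Real.sqrt (g * H)) := by
  constructor
  · intro x; ring
  · intro hgH
    have hs : Real.sqrt (g * H) > 0 := Real.sqrt_pos.mpr hgH
    have hsq : Real.sqrt (g * H) ^ 2 = g * H := Real.sq_sqrt hgH.le
    refine ⟨?_, by linarith, by linarith, by linarith⟩
    intro x
    constructor
    · intro h
      rcases mul_eq_zero.mp h with h1 | h2
      · left; linarith
      · have : (u - x - Real.sqrt (g * H)) * (u - x + Real.sqrt (g * H)) = 0 := by
          nlinarith [h2]
        rcases mul_eq_zero.mp this with h3 | h4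
        · right; right; linarith
        · right; left; linarith
    · rintro (rfl | rfl | rfl) <;> nlinarith
end

section
/- Let H:ℝ²→(0,∞), u:ℝ²→ℝ and Φ:ℝ²→ℝ be C¹ functions of (x,t), and define M(x,t,ξ) = (lH(x,t)/c(x,t))·χ((ξ−u(x,t))/c(x,t)) with c=√(gH/2). Then for every (x,t): ∫_ℝ (∂ₜM + ξ∂ₓM − ∂ₓΦ·∂_ξM)(x,t,ξ)dξ = ∂ₜ(lH) + ∂ₓ(lHu), and ∫_ℝ ξ(∂ₜM + ξ∂ₓM − ∂ₓΦ·∂_ξM)(x,t,ξ)dξ = ∂ₜ(lHu) + ∂ₓ(lHu² + g l H²/2) + lH·∂ₓΦ. -/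
open MeasureTheory Metric

section Aux

/-- compact support of `x ↦ g x * φ ((x - a)/b)` -/
lemma aux_hcs {φ : ℝ → ℝ} (hs : HasCompactSupport φ) (gf : ℝ → ℝ) (a b : ℝ) (hb : b ≠ 0) :
    HasCompactSupport (fun x => gf x * φ ((x - a) / b)) := by
  obtain ⟨R, hR⟩ := hs.isBounded.subset_closedBall 0
  apply HasCompactSupport.intro (isCompact_closedBall (0:ℝ) (|a| + |b| * |R|))
  intro x hx
  have hx' : |a| + |b| * |R| < |x| := by
    simpa [Real.dist_eq] using hx
  have h1 : φ ((x - a) / b) = 0 := by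
    apply image_eq_zero_of_notMem_tsupport
    intro hmem
    have := hR hmem
    have hle : |x - a| / |b| ≤ R := by simpa [Real.dist_eq, abs_div] using this
    have h2 : |x - a| ≤ R * |b| := by
      calc |x - a| = |x - a| / |b| * |b| := by field_simp
      _ ≤ R * |b| := by
        apply mul_le_mul_of_nonneg_right hle (abs_nonneg b)
    have h3 : |x| - |a| ≤ |x - a| := by
      have := abs_sub_abs_le_abs_sub x a
      linarith
    have hRle : R * |b| ≤ |R| * |b| := by
      apply mul_le_mul_of_nonneg_right (le_abs_self R) (abs_nonneg b)
    nlinarith [abs_nonneg b, abs_nonneg x]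
  simp [h1]

lemma aux_integrable {φ : ℝ → ℝ} (hc : Continuous φ) (hs : HasCompactSupport φ)
    {gf : ℝ → ℝ} (hg : Continuous gf) (a b : ℝ) (hb : b ≠ 0) :
    Integrable (fun x => gf x * φ ((x - a) / b)) := by
  apply Continuous.integrable_of_hasCompactSupport
  · exact hg.mul (hc.comp ((continuous_id.sub continuous_const).div_const b))
  · exact aux_hcs hs gf a b hb

/-- scaling: `∫ x, x^k φ(x/b) = b^k |b| ∫ w, w^k φ w` -/
lemma aux_scale (φ : ℝ → ℝ) (b : ℝ) (hb : b ≠ 0) (k : ℕ) :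
    (∫ x, x ^ k * φ (x / b)) = b ^ k * |b| * ∫ w, w ^ k * φ w := by
  have h : ∀ x : ℝ, x ^ k * φ (x / b) = b ^ k * ((fun w => w ^ k * φ w) (x / b)) := by
    intro x
    simp only []
    rw [div_pow]
    field_simp
  simp_rw [h]
  rw [MeasureTheory.integral_const_mul, Measure.integral_comp_div (fun w => w ^ k * φ w) b,
    smul_eq_mul]
  ring

/-- integral of an odd function is zero -/
lemma aux_odd {φ : ℝ → ℝ} (h : ∀ w, φ (-w) = -φ w) : (∫ w, φ w) = 0 := by
  have h1 : (∫ w, φ (-w)) = ∫ w, φ w := integral_neg_eq_self φ volume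
  have h2 : (∫ w, φ (-w)) = - ∫ w, φ w := by
    simp_rw [h]; exact integral_neg φ
  linarith

/-- integral of the derivative of a C¹ compactly supported function vanishes -/
lemma aux_int_deriv {φ : ℝ → ℝ} (h1 : ContDiff ℝ 1 φ) (hs : HasCompactSupport φ) :
    (∫ w, deriv φ w) = 0 := by
  obtain ⟨R, hR⟩ := hs.isBounded.subset_closedBall 0
  have hR' : tsupport φ ⊆ closedBall 0 (|R|) :=
    hR.trans (closedBall_subset_closedBall (le_abs_self R))
  have hzero : ∀ x : ℝ, x ∉ Set.Ioc (-(|R|+1)) (|R|+1) → deriv φ x = 0 := by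
    intro x hx
    by_contra hne
    have hb : |x| ≤ |R| := by
      have := hR' (support_deriv_subset (Function.mem_support.mpr hne))
      simpa [Real.dist_eq] using this
    rw [Set.mem_Ioc, not_and_or] at hx
    rcases hx with hx | hx <;> [skip; skip] <;>
      · push_neg at hx
        cases abs_le.mp hb
        linarith
  have hderiv_int : Integrable (deriv φ) :=
    (h1.continuous_deriv le_rfl).integrable_of_hasCompactSupport hs.deriv
  have : (∫ w, deriv φ w) = ∫ w in Set.Ioc (-(|R|+1)) (|R|+1), deriv φ w :=
    (setIntegral_eq_integral_of_forall_compl_eq_zero (fun x hx => hzero x hx)).symm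
  rw [this, ← intervalIntegral.integral_of_le (by linarith [abs_nonneg R] : -(|R|+1) ≤ |R|+1)]
  rw [intervalIntegral.integral_deriv_eq_sub
    (fun x _ => (h1.differentiable one_ne_zero).differentiableAt)
    (hderiv_int.intervalIntegrable)]
  · have z1 : φ (|R|+1) = 0 := image_eq_zero_of_notMem_tsupport fun hm => by
      have := hR' hm
      have h2 := le_abs_self (|R|+1)
      simp [Real.dist_eq] at this
      linarith [abs_nonneg R]
    have z2 : φ (-(|R|+1)) = 0 := image_eq_zero_of_notMem_tsupport fun hm => by
      have := hR' hm
      have h2 := le_abs_self (|R|+1)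
      rw [mem_closedBall, Real.dist_eq, sub_zero, abs_neg] at this
      linarith [abs_nonneg R]
    rw [z1, z2, sub_zero]

/-- moments of `x ↦ φ((x-a)/b)` -/
lemma aux_mom {φ : ℝ → ℝ} (hc : Continuous φ) (hs : HasCompactSupport φ) (a b : ℝ) (hb : 0 < b) :
    (∫ x, φ ((x - a) / b)) = b * (∫ w, φ w) ∧
    (∫ x, x * φ ((x - a) / b)) = b * (a * (∫ w, φ w) + b * (∫ w, w * φ w)) ∧
    (∫ x, x ^ 2 * φ ((x - a) / b))
      = b * (a ^ 2 * (∫ w, φ w) + 2 * a * b * (∫ w, w * φ w)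
          + b ^ 2 * (∫ w, w ^ 2 * φ w)) := by
  have hbne := ne_of_gt hb
  have i0 : Integrable (fun x : ℝ => φ (x / b)) := by
    simpa using aux_integrable hc hs (continuous_const : Continuous fun _ : ℝ => (1:ℝ)) 0 b hbne
  have i1 : Integrable (fun x : ℝ => x * φ (x / b)) := by
    simpa using aux_integrable hc hs continuous_id 0 b hbne
  have i2 : Integrable (fun x : ℝ => x ^ 2 * φ (x / b)) := by
    simpa using aux_integrable hc hs (continuous_pow 2) 0 b hbne
  have s0 : (∫ x, φ (x / b)) = b * ∫ w, φ w := by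
    rw [Measure.integral_comp_div φ b, smul_eq_mul, abs_of_pos hb]
  have s1 : (∫ x, x * φ (x / b)) = b * b * ∫ w, w * φ w := by
    have h := aux_scale φ b hbne 1
    simp only [pow_one] at h
    rw [h, abs_of_pos hb]
  have s2 : (∫ x, x ^ 2 * φ (x / b)) = b ^ 2 * b * ∫ w, w ^ 2 * φ w := by
    have h := aux_scale φ b hbne 2
    rw [h, abs_of_pos hb]
  refine ⟨?_, ?_, ?_⟩
  · have ht : (∫ x, φ ((x - a) / b)) = ∫ x, φ (x / b) :=
      integral_sub_right_eq_self (fun y => φ (y / b)) a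
    rw [ht, s0]
  · have ht : (∫ x, x * φ ((x - a) / b)) = ∫ x, (x + a) * φ (x / b) := by
      rw [← integral_sub_right_eq_self (fun y => (y + a) * φ (y / b)) a]
      congr 1; funext x; ring_nf
    rw [ht]
    have hsplit : ∀ x : ℝ, (x + a) * φ (x / b) = x * φ (x / b) + a * φ (x / b) := by
      intro x; ring
    simp_rw [hsplit]
    rw [integral_add i1 (i0.const_mul a), MeasureTheory.integral_const_mul, s0, s1]
    ring
  · have ht : (∫ x, x ^ 2 * φ ((x - a) / b)) = ∫ x, (x + a) ^ 2 * φ (x / b) := by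
      rw [← integral_sub_right_eq_self (fun y => (y + a) ^ 2 * φ (y / b)) a]
      congr 1; funext x; ring_nf
    rw [ht]
    have hsplit : ∀ x : ℝ, (x + a) ^ 2 * φ (x / b)
        = x ^ 2 * φ (x / b) + (2 * a) * (x * φ (x / b)) + a ^ 2 * φ (x / b) := by
      intro x; ring
    simp_rw [hsplit]
    have hf2 : Integrable (fun x : ℝ => x ^ 2 * φ (x / b) + 2 * a * (x * φ (x / b))) :=
      i2.add (i1.const_mul (2 * a))
    rw [integral_add hf2 (i0.const_mul _),
      integral_add i2 (i1.const_mul _), MeasureTheory.integral_const_mul,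
      MeasureTheory.integral_const_mul, s0, s1, s2]
    ring

lemma aux_deriv_odd {χ : ℝ → ℝ} (he : ∀ w, χ (-w) = χ w) :
    ∀ w, deriv χ (-w) = - deriv χ w := by
  intro w
  have h1 : deriv (fun x => χ (-x)) w = - deriv χ (-w) := deriv_comp_neg χ w
  have h2 : (fun x => χ (-x)) = χ := funext he
  rw [h2] at h1; linarith

/-- differentiation under the integral sign for a C¹ family with uniformly compact support -/
lemma aux_param (F : ℝ → ℝ → ℝ) (hF : ContDiff ℝ 1 (fun q : ℝ × ℝ => F q.1 q.2)) (s₀ : ℝ)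
    (K : Set ℝ) (hK : IsCompact K)
    (hzero : ∀ s ∈ ball s₀ 1, ∀ ξ, ξ ∉ K → F s ξ = 0) :
    Integrable (fun ξ => deriv (fun s => F s ξ) s₀) ∧
      HasDerivAt (fun s => ∫ ξ, F s ξ) (∫ ξ, deriv (fun s => F s ξ) s₀) s₀ := by
  have hGd : Differentiable ℝ (fun q : ℝ × ℝ => F q.1 q.2) := hF.differentiable one_ne_zero
  set G : ℝ × ℝ → ℝ := fun q => F q.1 q.2 with hG
  set F' : ℝ → ℝ → ℝ := fun s ξ => fderiv ℝ G (s, ξ) (1, 0) with hF'def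
  have hderiv : ∀ s ξ, HasDerivAt (fun s' => F s' ξ) (F' s ξ) s := by
    intro s ξ
    have h1 : HasDerivAt (fun s' : ℝ => (s', ξ)) ((1 : ℝ), (0 : ℝ)) s :=
      (hasDerivAt_id s).prodMk (hasDerivAt_const s ξ)
    have h2 := (hGd (s, ξ)).hasFDerivAt.comp_hasDerivAt s h1
    exact h2
  have hF'cont : Continuous fun q : ℝ × ℝ => fderiv ℝ G q (1, 0) :=
    (hF.continuous_fderiv one_ne_zero).clm_apply continuous_const
  have hF'zero : ∀ s ∈ ball s₀ 1, ∀ ξ, ξ ∉ K → F' s ξ = 0 := by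
    intro s hs ξ hξ
    have hev : (fun s' => F s' ξ) =ᶠ[nhds s] fun _ => (0:ℝ) :=
      Filter.eventually_of_mem (isOpen_ball.mem_nhds hs) fun s' hs' => hzero s' hs' ξ hξ
    have h3 := (hderiv s ξ).deriv
    rw [← h3, hev.deriv_eq]
    simp
  obtain ⟨C, hC⟩ := ((isCompact_closedBall s₀ 1).prod hK).exists_bound_of_continuousOn
      hF'cont.continuousOn
  have bound_int : Integrable (K.indicator fun _ => C) := by
    rw [integrable_indicator_iff hK.measurableSet]
    exact integrableOn_const hK.measure_lt_top.ne
  have h_bound : ∀ ξ, ∀ s ∈ ball s₀ 1, ‖F' s ξ‖ ≤ K.indicator (fun _ => C) ξ := by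
    intro ξ s hs
    by_cases hξ : ξ ∈ K
    · rw [Set.indicator_of_mem hξ]
      exact hC (s, ξ) ⟨ball_subset_closedBall hs, hξ⟩
    · rw [Set.indicator_of_notMem hξ, hF'zero s hs ξ hξ, norm_zero]
  have hcont : ∀ s, Continuous (F s) := by
    intro s
    exact hF.continuous.comp (Continuous.prodMk_right s)
  have hF_int : Integrable (F s₀) := by
    apply (hcont s₀).integrable_of_hasCompactSupport
    exact HasCompactSupport.intro hK (hzero s₀ (mem_ball_self one_pos))
  have hF'_meas : AEStronglyMeasurable (F' s₀) volume :=
    (hF'cont.comp (Continuous.prodMk_right s₀)).aestronglyMeasurable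
  have main := hasDerivAt_integral_of_dominated_loc_of_deriv_le (ball_mem_nhds s₀ one_pos)
    (Filter.Eventually.of_forall fun s => (hcont s).aestronglyMeasurable) hF_int hF'_meas
    (Filter.Eventually.of_forall fun ξ => h_bound ξ) bound_int
    (Filter.Eventually.of_forall fun ξ s hs => hderiv s ξ)
  have hfun : (fun ξ => deriv (fun s => F s ξ) s₀) = fun ξ => F' s₀ ξ :=
    funext fun ξ => (hderiv s₀ ξ).deriv
  rw [hfun]
  exact main

/-- uniform compact support in `ξ` of `χ ((ξ - γ s)/σ s)` for `s` in a ball -/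
lemma aux_supp_unif {χ : ℝ → ℝ} (hχsupp : HasCompactSupport χ) (γ σ : ℝ → ℝ)
    (hγ : Continuous γ) (hσ : Continuous σ) (hσpos : ∀ s, 0 < σ s) (s₀ : ℝ) :
    ∃ K : Set ℝ, IsCompact K ∧
      ∀ s ∈ closedBall s₀ 1, ∀ ξ, ξ ∉ K → χ ((ξ - γ s) / σ s) = 0 := by
  obtain ⟨R, hR⟩ := hχsupp.isBounded.subset_closedBall 0
  obtain ⟨Cu, hCu⟩ := (isCompact_closedBall s₀ 1).exists_bound_of_continuousOn hγ.continuousOn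
  obtain ⟨Cc, hCc⟩ := (isCompact_closedBall s₀ 1).exists_bound_of_continuousOn hσ.continuousOn
  have hCu0 : 0 ≤ Cu := le_trans (norm_nonneg _) (hCu s₀ (mem_closedBall_self one_pos.le))
  have hCc0 : 0 ≤ Cc := le_trans (norm_nonneg _) (hCc s₀ (mem_closedBall_self one_pos.le))
  refine ⟨closedBall 0 (Cu + Cc * |R|), isCompact_closedBall _ _, ?_⟩
  intro s hs ξ hξ
  apply image_eq_zero_of_notMem_tsupport
  intro hmem
  have h1 : |(ξ - γ s) / σ s| ≤ |R| := by
    have := hR hmem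
    rw [mem_closedBall, Real.dist_eq, sub_zero] at this
    exact this.trans (le_abs_self R)
  have hσs := hσpos s
  have hle : |ξ - γ s| ≤ |R| * σ s := by
    rw [abs_div, abs_of_pos hσs, div_le_iff₀ hσs] at h1
    linarith
  have hb1 : |γ s| ≤ Cu := by simpa using hCu s hs
  have hb2 : σ s ≤ Cc := by
    have := hCc s hs
    rw [Real.norm_eq_abs, abs_of_pos hσs] at this
    exact this
  have hξ' : Cu + Cc * |R| < |ξ| := by
    have := hξ
    rw [mem_closedBall, Real.dist_eq, sub_zero] at this
    push_neg at this
    exact this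
  have h3 : |ξ| - |γ s| ≤ |ξ - γ s| := by
    have := abs_sub_abs_le_abs_sub ξ (γ s)
    linarith
  nlinarith [abs_nonneg R, abs_nonneg ξ, abs_nonneg (γ s)]

end Aux

set_option maxHeartbeats 1000000 in
/-- Moments of the kinetic transport operator applied to the Gibbs equilibrium
`M(x,t,ξ) = (lH/c)·χ((ξ−u)/c)`, `c = √(gH/2)`, recover the mass and momentum
fluxes of the shallow water system with potential `Φ` (playing the role of
`pᵃ + g z_b`). -/
theorem gibbs_equilibrium_transport_moments
    (g l : ℝ) (hg : 0 < g) (hl : 0 < l)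
    (χ : ℝ → ℝ) (hχ : ContDiff ℝ 1 χ) (hχsupp : HasCompactSupport χ)
    (hχeven : ∀ w, χ (-w) = χ w) (hχpos : ∀ w, 0 ≤ χ w)
    (hχ0 : (∫ w, χ w) = 1) (hχ2 : (∫ w, w ^ 2 * χ w) = 1)
    (H u Φ : ℝ → ℝ → ℝ)
    (hH : ContDiff ℝ 1 fun p : ℝ × ℝ => H p.1 p.2)
    (hu : ContDiff ℝ 1 fun p : ℝ × ℝ => u p.1 p.2)
    (hΦ : ContDiff ℝ 1 fun p : ℝ × ℝ => Φ p.1 p.2)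
    (hHpos : ∀ x t, 0 < H x t)
    (M : ℝ → ℝ → ℝ → ℝ)
    (hM : ∀ x t ξ, M x t ξ =
      l * H x t / Real.sqrt (g * H x t / 2)
        * χ ((ξ - u x t) / Real.sqrt (g * H x t / 2))) :
    ∀ x t,
      (∫ ξ, (deriv (fun τ => M x τ ξ) t + ξ * deriv (fun y => M y t ξ) x
          - deriv (fun y => Φ y t) x * deriv (fun ζ => M x t ζ) ξ))
        = deriv (fun τ => l * H x τ) t + deriv (fun y => l * H y t * u y t) x ∧
      (∫ ξ, ξ * (deriv (fun τ => M x τ ξ) t + ξ * deriv (fun y => M y t ξ) x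
          - deriv (fun y => Φ y t) x * deriv (fun ζ => M x t ζ) ξ))
        = deriv (fun τ => l * H x τ * u x τ) t
          + deriv (fun y => l * H y t * (u y t) ^ 2 + g * l * (H y t) ^ 2 / 2) x
          + l * H x t * deriv (fun y => Φ y t) x := by
  -- basic facts about χ and its derivative
  have hχcont : Continuous χ := hχ.continuous
  have hχ'cont : Continuous (deriv χ) := hχ.continuous_deriv le_rfl
  have hχ'supp : HasCompactSupport (deriv χ) := hχsupp.deriv
  have hχ1 : (∫ w, w * χ w) = 0 := by
    apply aux_odd
    intro w
    rw [hχeven]; ring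
  have hχ'odd := aux_deriv_odd hχeven
  have hχ'0 : (∫ w, deriv χ w) = 0 := aux_odd hχ'odd
  have hχ'1 : (∫ w, w * deriv χ w) = -1 := by
    have hf : ContDiff ℝ 1 (fun w : ℝ => w * χ w) := contDiff_id.mul hχ
    have hfs : HasCompactSupport (fun w : ℝ => w * χ w) := hχsupp.mul_left
    have hd : ∀ w, deriv (fun w : ℝ => w * χ w) w = χ w + w * deriv χ w := by
      intro w
      have h1 : HasDerivAt (fun w : ℝ => w * χ w) (1 * χ w + w * deriv χ w) w :=
        (hasDerivAt_id w).mul ((hχ.differentiable one_ne_zero w).hasDerivAt)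
      simpa using h1.deriv
    have h0 := aux_int_deriv hf hfs
    simp_rw [hd] at h0
    have iχ : Integrable χ := hχcont.integrable_of_hasCompactSupport hχsupp
    have iwχ' : Integrable (fun w : ℝ => w * deriv χ w) := by
      apply Continuous.integrable_of_hasCompactSupport
      · exact continuous_id.mul hχ'cont
      · exact hχ'supp.mul_left
    rw [integral_add iχ iwχ', hχ0] at h0
    linarith
  -- positivity of the sound speed
  have hcpos : ∀ y τ, 0 < Real.sqrt (g * H y τ / 2) := fun y τ =>
    Real.sqrt_pos.mpr (by have := hHpos y τ; positivity)
  have hcne : ∀ y τ, Real.sqrt (g * H y τ / 2) ≠ 0 := fun y τ => (hcpos y τ).ne'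
  have csq : ∀ y τ, Real.sqrt (g * H y τ / 2) ^ 2 = g * H y τ / 2 := fun y τ =>
    Real.sq_sqrt (by have := hHpos y τ; positivity)
  -- joint smoothness of M in all three variables
  have hH3 : ContDiff ℝ 1 (fun q : ℝ × ℝ × ℝ => H q.1 q.2.1) :=
    hH.comp (contDiff_fst.prodMk (contDiff_fst.comp contDiff_snd))
  have hu3 : ContDiff ℝ 1 (fun q : ℝ × ℝ × ℝ => u q.1 q.2.1) :=
    hu.comp (contDiff_fst.prodMk (contDiff_fst.comp contDiff_snd))
  have hsqrt3 : ContDiff ℝ 1 (fun q : ℝ × ℝ × ℝ => Real.sqrt (g * H q.1 q.2.1 / 2)) := by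
    rw [contDiff_iff_contDiffAt]
    intro q
    have hpos : g * H q.1 q.2.1 / 2 ≠ 0 := by
      have := hHpos q.1 q.2.1; positivity
    exact (Real.contDiffAt_sqrt hpos).comp q
      (((contDiff_const.mul hH3).div_const 2).contDiffAt)
  have hM3 : ContDiff ℝ 1 (fun q : ℝ × ℝ × ℝ => M q.1 q.2.1 q.2.2) := by
    have hMeq : (fun q : ℝ × ℝ × ℝ => M q.1 q.2.1 q.2.2)
        = fun q : ℝ × ℝ × ℝ => l * H q.1 q.2.1 / Real.sqrt (g * H q.1 q.2.1 / 2)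
            * χ ((q.2.2 - u q.1 q.2.1) / Real.sqrt (g * H q.1 q.2.1 / 2)) :=
      funext fun q => hM _ _ _
    rw [hMeq]
    apply ContDiff.mul
    · exact (contDiff_const.mul hH3).div hsqrt3 fun q => hcne _ _
    · exact hχ.comp (((contDiff_snd.comp contDiff_snd).sub hu3).div hsqrt3 fun q => hcne _ _)
  -- moment identities
  have hm0 : ∀ y τ, (∫ ξ, M y τ ξ) = l * H y τ := by
    intro y τ
    simp_rw [hM y τ]
    rw [MeasureTheory.integral_const_mul, (aux_mom hχcont hχsupp (u y τ) _ (hcpos y τ)).1, hχ0]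
    rw [mul_one, div_mul_cancel₀ _ (hcne y τ)]
  have hm1 : ∀ y τ, (∫ ξ, ξ * M y τ ξ) = l * H y τ * u y τ := by
    intro y τ
    simp_rw [hM y τ]
    have hre : ∀ ξ : ℝ, ξ * (l * H y τ / Real.sqrt (g * H y τ / 2)
        * χ ((ξ - u y τ) / Real.sqrt (g * H y τ / 2)))
        = (l * H y τ / Real.sqrt (g * H y τ / 2))
          * (ξ * χ ((ξ - u y τ) / Real.sqrt (g * H y τ / 2))) := fun ξ => by ring
    simp_rw [hre]
    rw [MeasureTheory.integral_const_mul,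
      (aux_mom hχcont hχsupp (u y τ) _ (hcpos y τ)).2.1, hχ0, hχ1]
    set c := Real.sqrt (g * H y τ / 2) with hcdef
    have hcn : c ≠ 0 := hcne y τ
    field_simp
    ring
  have hm2 : ∀ y τ, (∫ ξ, ξ ^ 2 * M y τ ξ)
      = l * H y τ * (u y τ) ^ 2 + g * l * (H y τ) ^ 2 / 2 := by
    intro y τ
    simp_rw [hM y τ]
    have hre : ∀ ξ : ℝ, ξ ^ 2 * (l * H y τ / Real.sqrt (g * H y τ / 2)
        * χ ((ξ - u y τ) / Real.sqrt (g * H y τ / 2)))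
        = (l * H y τ / Real.sqrt (g * H y τ / 2))
          * (ξ ^ 2 * χ ((ξ - u y τ) / Real.sqrt (g * H y τ / 2))) := fun ξ => by ring
    simp_rw [hre]
    rw [MeasureTheory.integral_const_mul,
      (aux_mom hχcont hχsupp (u y τ) _ (hcpos y τ)).2.2, hχ0, hχ1, hχ2]
    set c := Real.sqrt (g * H y τ / 2) with hcdef
    have hcn : c ≠ 0 := hcne y τ
    have hc2 : c ^ 2 = g * H y τ / 2 := csq y τ
    rw [hc2]
    field_simp
    ring
  -- pointwise ξ-derivative of M
  have hMxi : ∀ y τ ξ, HasDerivAt (fun ζ => M y τ ζ)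
      ((l * H y τ / Real.sqrt (g * H y τ / 2))
        * (deriv χ ((ξ - u y τ) / Real.sqrt (g * H y τ / 2))
          * (1 / Real.sqrt (g * H y τ / 2)))) ξ := by
    intro y τ ξ
    have h1 : HasDerivAt (fun ζ : ℝ => (ζ - u y τ) / Real.sqrt (g * H y τ / 2))
        (1 / Real.sqrt (g * H y τ / 2)) ξ := by
      simpa using ((hasDerivAt_id ξ).sub_const (u y τ)).div_const (Real.sqrt (g * H y τ / 2))
    have h2 : HasDerivAt χ (deriv χ ((ξ - u y τ) / Real.sqrt (g * H y τ / 2)))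
        ((ξ - u y τ) / Real.sqrt (g * H y τ / 2)) :=
      (hχ.differentiable one_ne_zero _).hasDerivAt
    have h3 := (h2.comp ξ h1).const_mul (l * H y τ / Real.sqrt (g * H y τ / 2))
    have h4 : (fun ζ => M y τ ζ) = fun ζ => l * H y τ / Real.sqrt (g * H y τ / 2)
        * χ ((ζ - u y τ) / Real.sqrt (g * H y τ / 2)) := funext fun ζ => hM y τ ζ
    rw [h4]
    exact h3
  have hC0 : ∀ y τ, (∫ ξ, deriv (fun ζ => M y τ ζ) ξ) = 0 := by
    intro y τ
    have hde : ∀ ξ, deriv (fun ζ => M y τ ζ) ξ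
        = (l * H y τ / Real.sqrt (g * H y τ / 2) * (1 / Real.sqrt (g * H y τ / 2)))
          * deriv χ ((ξ - u y τ) / Real.sqrt (g * H y τ / 2)) := by
      intro ξ
      rw [(hMxi y τ ξ).deriv]; ring
    simp_rw [hde]
    rw [MeasureTheory.integral_const_mul,
      (aux_mom hχ'cont hχ'supp (u y τ) _ (hcpos y τ)).1, hχ'0]
    ring
  have hC1 : ∀ y τ, (∫ ξ, ξ * deriv (fun ζ => M y τ ζ) ξ) = -(l * H y τ) := by
    intro y τ
    have hde : ∀ ξ, ξ * deriv (fun ζ => M y τ ζ) ξ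
        = (l * H y τ / Real.sqrt (g * H y τ / 2) * (1 / Real.sqrt (g * H y τ / 2)))
          * (ξ * deriv χ ((ξ - u y τ) / Real.sqrt (g * H y τ / 2))) := by
      intro ξ
      rw [(hMxi y τ ξ).deriv]; ring
    simp_rw [hde]
    rw [MeasureTheory.integral_const_mul,
      (aux_mom hχ'cont hχ'supp (u y τ) _ (hcpos y τ)).2.1, hχ'0, hχ'1]
    set c := Real.sqrt (g * H y τ / 2) with hcdef
    have hcn : c ≠ 0 := hcne y τ
    field_simp
    try ring
  intro x t
  -- uniform supports
  have hucx : Continuous fun τ => u x τ := hu.continuous.comp (Continuous.prodMk_right x)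
  have hccx : Continuous fun τ => Real.sqrt (g * H x τ / 2) :=
    Real.continuous_sqrt.comp
      ((continuous_const.mul (hH.continuous.comp (Continuous.prodMk_right x))).div_const 2)
  have huct : Continuous fun y => u y t :=
    hu.continuous.comp (continuous_id.prodMk continuous_const)
  have hcct : Continuous fun y => Real.sqrt (g * H y t / 2) :=
    Real.continuous_sqrt.comp
      ((continuous_const.mul
        (hH.continuous.comp (continuous_id.prodMk continuous_const))).div_const 2)
  obtain ⟨Kt, hKt, hKtz⟩ := aux_supp_unif hχsupp (fun τ => u x τ)
    (fun τ => Real.sqrt (g * H x τ / 2)) hucx hccx (fun τ => hcpos x τ) t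
  obtain ⟨Kx, hKx, hKxz⟩ := aux_supp_unif hχsupp (fun y => u y t)
    (fun y => Real.sqrt (g * H y t / 2)) huct hcct (fun y => hcpos y t) x
  have hzt : ∀ τ ∈ ball t 1, ∀ ξ, ξ ∉ Kt → M x τ ξ = 0 := by
    intro τ hτ ξ hξ
    rw [hM, hKtz τ (ball_subset_closedBall hτ) ξ hξ, mul_zero]
  have hzx : ∀ y ∈ ball x 1, ∀ ξ, ξ ∉ Kx → M y t ξ = 0 := by
    intro y hy ξ hξ
    rw [hM, hKxz y (ball_subset_closedBall hy) ξ hξ, mul_zero]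
  -- C¹ slice families
  have hFt : ContDiff ℝ 1 (fun q : ℝ × ℝ => M x q.1 q.2) :=
    hM3.comp ((contDiff_const : ContDiff ℝ 1 fun _ : ℝ × ℝ => x).prodMk
      (contDiff_fst.prodMk contDiff_snd))
  have hFx : ContDiff ℝ 1 (fun q : ℝ × ℝ => M q.1 t q.2) :=
    hM3.comp (contDiff_fst.prodMk
      ((contDiff_const : ContDiff ℝ 1 fun _ : ℝ × ℝ => t).prodMk contDiff_snd))
  -- parametric derivatives
  have P0 := aux_param (fun τ ξ => M x τ ξ) hFt t Kt hKt hzt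
  have P1 := aux_param (fun τ ξ => ξ * M x τ ξ) (contDiff_snd.mul hFt) t Kt hKt
    (fun τ hτ ξ hξ => by show ξ * M x τ ξ = 0; rw [hzt τ hτ ξ hξ, mul_zero])
  have Q1 := aux_param (fun y ξ => ξ * M y t ξ) (contDiff_snd.mul hFx) x Kx hKx
    (fun y hy ξ hξ => by show ξ * M y t ξ = 0; rw [hzx y hy ξ hξ, mul_zero])
  have Q2 := aux_param (fun y ξ => ξ ^ 2 * M y t ξ) ((contDiff_snd.pow 2).mul hFx) x Kx hKx
    (fun y hy ξ hξ => by show ξ ^ 2 * M y t ξ = 0; rw [hzx y hy ξ hξ, mul_zero])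
  -- differentiability of slices, and pulling constants out of derivatives
  have hDt : ∀ ξ τ, DifferentiableAt ℝ (fun τ' => M x τ' ξ) τ := by
    intro ξ τ
    exact (hFt.differentiable one_ne_zero (τ, ξ)).comp τ
      (differentiableAt_id.prodMk (differentiableAt_const ξ) : DifferentiableAt ℝ (fun τ' : ℝ => (τ', ξ)) τ)
  have hDx : ∀ ξ y, DifferentiableAt ℝ (fun y' => M y' t ξ) y := by
    intro ξ y
    exact (hFx.differentiable one_ne_zero (y, ξ)).comp y
      (differentiableAt_id.prodMk (differentiableAt_const ξ) : DifferentiableAt ℝ (fun y' : ℝ => (y', ξ)) y)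
  have hmul_t : ∀ ξ, deriv (fun τ => ξ * M x τ ξ) t = ξ * deriv (fun τ => M x τ ξ) t :=
    fun ξ => deriv_const_mul ξ (hDt ξ t)
  have hmul_x1 : ∀ ξ, deriv (fun y => ξ * M y t ξ) x = ξ * deriv (fun y => M y t ξ) x :=
    fun ξ => deriv_const_mul ξ (hDx ξ x)
  have hmul_x2 : ∀ ξ, deriv (fun y => ξ ^ 2 * M y t ξ) x
      = ξ ^ 2 * deriv (fun y => M y t ξ) x :=
    fun ξ => deriv_const_mul (ξ ^ 2) (hDx ξ x)
  -- integral identities for the parametric derivatives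
  have e0 : (∫ ξ, deriv (fun τ => M x τ ξ) t) = deriv (fun τ => l * H x τ) t := by
    have h2 : HasDerivAt (fun τ => l * H x τ) (∫ ξ, deriv (fun τ => M x τ ξ) t) t :=
      P0.2.congr_of_eventuallyEq (Filter.Eventually.of_forall fun τ => (hm0 x τ).symm)
    exact h2.deriv.symm
  have e1t : (∫ ξ, ξ * deriv (fun τ => M x τ ξ) t)
      = deriv (fun τ => l * H x τ * u x τ) t := by
    have h2 : HasDerivAt (fun τ => l * H x τ * u x τ)
        (∫ ξ, deriv (fun τ => ξ * M x τ ξ) t) t :=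
      P1.2.congr_of_eventuallyEq (Filter.Eventually.of_forall fun τ => (hm1 x τ).symm)
    rw [← integral_congr_ae (Filter.Eventually.of_forall hmul_t)]
    exact h2.deriv.symm
  have e1x : (∫ ξ, ξ * deriv (fun y => M y t ξ) x)
      = deriv (fun y => l * H y t * u y t) x := by
    have h2 : HasDerivAt (fun y => l * H y t * u y t)
        (∫ ξ, deriv (fun y => ξ * M y t ξ) x) x :=
      Q1.2.congr_of_eventuallyEq (Filter.Eventually.of_forall fun y => (hm1 y t).symm)
    rw [← integral_congr_ae (Filter.Eventually.of_forall hmul_x1)]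
    exact h2.deriv.symm
  have e2x : (∫ ξ, ξ ^ 2 * deriv (fun y => M y t ξ) x)
      = deriv (fun y => l * H y t * (u y t) ^ 2 + g * l * (H y t) ^ 2 / 2) x := by
    have h2 : HasDerivAt (fun y => l * H y t * (u y t) ^ 2 + g * l * (H y t) ^ 2 / 2)
        (∫ ξ, deriv (fun y => ξ ^ 2 * M y t ξ) x) x :=
      Q2.2.congr_of_eventuallyEq (Filter.Eventually.of_forall fun y => (hm2 y t).symm)
    rw [← integral_congr_ae (Filter.Eventually.of_forall hmul_x2)]
    exact h2.deriv.symm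
  -- integrability of all the pieces
  have iA : Integrable (fun ξ => deriv (fun τ => M x τ ξ) t) := P0.1
  have iξA : Integrable (fun ξ => ξ * deriv (fun τ => M x τ ξ) t) :=
    P1.1.congr (Filter.Eventually.of_forall hmul_t)
  have iξB : Integrable (fun ξ => ξ * deriv (fun y => M y t ξ) x) :=
    Q1.1.congr (Filter.Eventually.of_forall hmul_x1)
  have iξ2B : Integrable (fun ξ => ξ ^ 2 * deriv (fun y => M y t ξ) x) :=
    Q2.1.congr (Filter.Eventually.of_forall hmul_x2)
  have hCform : ∀ ξ, deriv (fun ζ => M x t ζ) ξ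
      = (l * H x t / Real.sqrt (g * H x t / 2) * (1 / Real.sqrt (g * H x t / 2)))
        * deriv χ ((ξ - u x t) / Real.sqrt (g * H x t / 2)) := by
    intro ξ
    rw [(hMxi x t ξ).deriv]; ring
  have iC : Integrable (fun ξ => deriv (fun ζ => M x t ζ) ξ) := by
    have h := aux_integrable hχ'cont hχ'supp
      (continuous_const : Continuous fun _ : ℝ =>
        l * H x t / Real.sqrt (g * H x t / 2) * (1 / Real.sqrt (g * H x t / 2)))
      (u x t) (Real.sqrt (g * H x t / 2)) (hcne x t)
    exact h.congr (Filter.Eventually.of_forall fun ξ => (hCform ξ).symm)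
  have iξC : Integrable (fun ξ => ξ * deriv (fun ζ => M x t ζ) ξ) := by
    have hgc : Continuous fun ξ : ℝ =>
        ξ * (l * H x t / Real.sqrt (g * H x t / 2) * (1 / Real.sqrt (g * H x t / 2))) :=
      continuous_id.mul continuous_const
    have h := aux_integrable hχ'cont hχ'supp hgc
      (u x t) (Real.sqrt (g * H x t / 2)) (hcne x t)
    apply h.congr (Filter.Eventually.of_forall fun ξ => ?_)
    rw [hCform ξ]; ring
  constructor
  · have hAB : Integrable (fun ξ => deriv (fun τ => M x τ ξ) t
        + ξ * deriv (fun y => M y t ξ) x) := iA.add iξB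
    have hDC : Integrable (fun ξ => deriv (fun y => Φ y t) x * deriv (fun ζ => M x t ζ) ξ) :=
      iC.const_mul _
    rw [integral_sub hAB hDC, integral_add iA iξB, MeasureTheory.integral_const_mul,
      e0, e1x, hC0 x t, mul_zero, sub_zero]
  · have hptw : ∀ ξ : ℝ, ξ * (deriv (fun τ => M x τ ξ) t + ξ * deriv (fun y => M y t ξ) x
        - deriv (fun y => Φ y t) x * deriv (fun ζ => M x t ζ) ξ)
        = (ξ * deriv (fun τ => M x τ ξ) t + ξ ^ 2 * deriv (fun y => M y t ξ) x)
          - deriv (fun y => Φ y t) x * (ξ * deriv (fun ζ => M x t ζ) ξ) := by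
      intro ξ; ring
    rw [integral_congr_ae (Filter.Eventually.of_forall hptw)]
    have hAB : Integrable (fun ξ => ξ * deriv (fun τ => M x τ ξ) t
        + ξ ^ 2 * deriv (fun y => M y t ξ) x) := iξA.add iξ2B
    have hDC : Integrable (fun ξ => deriv (fun y => Φ y t) x
        * (ξ * deriv (fun ζ => M x t ζ) ξ)) := iξC.const_mul _
    rw [integral_sub hAB hDC, integral_add iξA iξ2B, MeasureTheory.integral_const_mul,
      e1t, e2x, hC1 x t]
    ring
end

section
/- Let u, w : ℝ³→ℝ be C¹ functions of (x,z,t), let a, b : ℝ²→ℝ be C¹ with a(x,t) < b(x,t), and let η : ℝ²→ℝ be C¹. Suppose that on the layer a(x,t) ≤ z ≤ b(x,t) the hydrostatic Euler momentum equation ∂ₜu + ∂ₓ(u²) + ∂_z(uw) + ∂ₓp = 0 holds with hydrostatic pressure p(x,z,t) = g(η(x,t) − z). Define h = b − a and the interface exchange terms G_b = ∂ₜb + u(x,b,t)∂ₓb − w(x,b,t) and G_a = ∂ₜa + u(x,a,t)∂ₓa − w(x,a,t). Then ∂ₜ∫_a^b u dz + ∂ₓ∫_a^b u² dz + g h ∂ₓη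 = u(x,b(x,t),t)·G_b − u(x,a(x,t),t)·G_a for all (x,t). -/
open MeasureTheory intervalIntegral

section LeibnizAux

open Asymptotics Filter Set

/-- Leibniz rule for an interval integral with a moving right endpoint and a
parameter-dependent `C¹` integrand. -/
lemma leibniz_aux (f : ℝ → ℝ → ℝ)
    (hf : ContDiff ℝ 1 fun p : ℝ × ℝ => f p.1 p.2)
    (c : ℝ) {φ : ℝ → ℝ} {φ' s₀ : ℝ} (hφ : HasDerivAt φ φ' s₀) :
    HasDerivAt (fun s => ∫ z in c..(φ s), f z s)
      (f (φ s₀) s₀ * φ' + ∫ z in c..(φ s₀), deriv (fun s => f z s) s₀) s₀ := by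
  have hFc : Continuous fun p : ℝ × ℝ => f p.1 p.2 := hf.continuous
  set pd : ℝ → ℝ → ℝ := fun z s => fderiv ℝ (fun p : ℝ × ℝ => f p.1 p.2) (z, s) (0, 1) with hpddef
  have hpd : ∀ z s, HasDerivAt (fun s => f z s) (pd z s) s := by
    intro z s
    have h1 : HasDerivAt (fun s : ℝ => ((z, s) : ℝ × ℝ)) ((0 : ℝ), (1 : ℝ)) s :=
      (hasDerivAt_const s z).prodMk (hasDerivAt_id s)
    exact (hf.differentiable one_ne_zero (z, s)).hasFDerivAt.comp_hasDerivAt s h1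
  have hpdc : Continuous fun p : ℝ × ℝ => pd p.1 p.2 := by
    have := (hf.continuous_fderiv one_ne_zero)
    exact this.clm_apply continuous_const
  have hfz : ∀ s, Continuous fun z => f z s := fun s =>
    hFc.comp (continuous_id.prodMk continuous_const)
  -- compact set and bound
  set zlo : ℝ := min c (φ s₀) - 1
  set zhi : ℝ := max c (φ s₀) + 1
  set Z : Set ℝ := Icc zlo zhi
  set T : Set ℝ := Icc (s₀ - 1) (s₀ + 1)
  have hScomp : IsCompact (Z ×ˢ T) := isCompact_Icc.prod isCompact_Icc
  obtain ⟨M0, hM0⟩ := hScomp.exists_bound_of_continuousOn hpdc.continuousOn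
  set M : ℝ := max M0 0 with hMdef
  have hMnn : 0 ≤ M := le_max_right _ _
  have hM : ∀ z ∈ Z, ∀ s ∈ T, |pd z s| ≤ M := by
    intro z hz s hs
    calc |pd z s| ≤ M0 := by simpa using hM0 (z, s) ⟨hz, hs⟩
    _ ≤ M := le_max_left _ _
  have hZc : ∀ z ∈ Set.uIcc c (φ s₀), z ∈ Z := by
    intro z hz
    rcases hz with ⟨h1, h2⟩
    constructor
    · calc zlo ≤ min c (φ s₀) := by simp [zlo]
      _ ≤ z := by simpa [Set.uIcc] using h1
    · calc z ≤ max c (φ s₀) := by simpa [Set.uIcc] using h2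
      _ ≤ zhi := by simp [zhi]
  -- eventual facts
  have hev1 : ∀ᶠ s in nhds s₀, |φ s - φ s₀| ≤ 1 := by
    have := hφ.continuousAt (Metric.closedBall_mem_nhds (φ s₀) one_pos)
    filter_upwards [this] with s hs
    simpa [Real.dist_eq] using Metric.mem_closedBall.mp hs
  have hev2 : ∀ᶠ s in nhds s₀, |s - s₀| ≤ 1 := by
    filter_upwards [Metric.closedBall_mem_nhds s₀ one_pos] with s hs
    simpa [Real.dist_eq] using Metric.mem_closedBall.mp hs
  obtain ⟨K, hKev⟩ : ∃ K : ℝ, ∀ᶠ s in nhds s₀, |φ s - φ s₀| ≤ K * |s - s₀| := by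
    have h := hφ.isBigO_sub
    rcases Asymptotics.isBigO_iff.mp h with ⟨K, hK⟩
    exact ⟨K, by filter_upwards [hK] with s hs using by simpa [Real.norm_eq_abs] using hs⟩
  -- C1 : parameter derivative with fixed endpoints
  have hC1 : HasDerivAt (fun s => ∫ z in c..(φ s₀), f z s)
      (∫ z in c..(φ s₀), pd z s₀) s₀ := by
    have h := intervalIntegral.hasDerivAt_integral_of_dominated_loc_of_deriv_le
      (F := fun s z => f z s) (F' := fun s z => pd z s) (x₀ := s₀)
      (a := c) (b := φ s₀) (bound := fun _ => M) (μ := volume) (Metric.ball_mem_nhds s₀ one_pos)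
      (Eventually.of_forall fun s => ((hfz s).aestronglyMeasurable).restrict)
      ((hfz s₀).intervalIntegrable _ _)
      (((hpdc.comp (continuous_id.prodMk continuous_const)).aestronglyMeasurable).restrict)
      ?_ (intervalIntegrable_const) ?_
    · exact h.2
    · refine Eventually.of_forall fun z hz s hs => ?_
      have hzZ : z ∈ Z := hZc z (Set.uIoc_subset_uIcc hz)
      have hsT : s ∈ T := by
        have := Metric.mem_ball.mp hs
        rw [Real.dist_eq] at this
        constructor
        · linarith [(abs_le.mp this.le).1]
        · linarith [(abs_le.mp this.le).2]
      simpa [Real.norm_eq_abs] using hM z hzZ s hsT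
    · exact Eventually.of_forall fun z _ s _ => hpd z s
  -- A2 : moving endpoint, frozen parameter
  have hA2 : HasDerivAt (fun s => ∫ z in (φ s₀)..(φ s), f z s₀)
      (f (φ s₀) s₀ * φ') s₀ :=
    (((hfz s₀).integral_hasStrictDerivAt (φ s₀) (φ s₀)).hasDerivAt).comp s₀ hφ
  -- B2 : remainder term, derivative 0
  have hB2 : HasDerivAt (fun s => ∫ z in (φ s₀)..(φ s), (f z s - f z s₀)) 0 s₀ := by
    rw [hasDerivAt_iff_isLittleO]
    simp only [intervalIntegral.integral_same, smul_zero, sub_zero]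
    have big : (fun s => ∫ z in (φ s₀)..(φ s), (f z s - f z s₀)) =O[nhds s₀]
        fun s => (s - s₀) * (s - s₀) := by
      rw [Asymptotics.isBigO_iff]
      refine ⟨M * K, ?_⟩
      filter_upwards [hev1, hev2, hKev] with s h1 h2 hK
      have hZsub : ∀ z ∈ Set.uIoc (φ s₀) (φ s), z ∈ Z := by
        intro z hz
        have hz' := Set.uIoc_subset_uIcc hz
        rcases hz' with ⟨hl, hr⟩
        have habs := abs_le.mp h1
        constructor
        · have hge : min (φ s₀) (φ s) ≥ φ s₀ - 1 := by
            rcases le_total (φ s₀) (φ s) with hc | hc <;> simp [min_def, hc] <;> linarith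
          have hle2 : zlo ≤ φ s₀ - 1 := by
            have : min c (φ s₀) ≤ φ s₀ := min_le_right _ _
            simp only [zlo]; linarith
          linarith [le_trans hle2 hge, hl]
        · have h3 : max (φ s₀) (φ s) ≤ φ s₀ + 1 := by
            rcases le_total (φ s₀) (φ s) with hc | hc <;> simp [max_def, hc] <;> linarith
          have h4 : φ s₀ + 1 ≤ zhi := by
            have : φ s₀ ≤ max c (φ s₀) := le_max_right _ _
            simp only [zhi]; linarith
          linarith [hr, h3, h4]
      have hbnd : ∀ z ∈ Set.uIoc (φ s₀) (φ s), ‖f z s - f z s₀‖ ≤ M * |s - s₀| := by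
        intro z hz
        have hzZ := hZsub z hz
        have hsT : s ∈ T := abs_le.mp h2 |> fun h => ⟨by linarith [h.1], by linarith [h.2]⟩
        have hs₀T : s₀ ∈ T := by constructor <;> simp [T]
        have := Convex.norm_image_sub_le_of_norm_deriv_le (f := fun s => f z s)
          (s := T) (fun σ _ => (hpd z σ).differentiableAt)
          (fun σ hσ => by
            rw [(hpd z σ).deriv]
            simpa [Real.norm_eq_abs] using hM z hzZ σ hσ)
          (convex_Icc _ _) hs₀T hsT
        simpa [Real.norm_eq_abs] using this
      have hle := intervalIntegral.norm_integral_le_of_norm_le_const hbnd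
      calc ‖∫ z in (φ s₀)..(φ s), (f z s - f z s₀)‖ ≤ M * |s - s₀| * |φ s - φ s₀| := hle
      _ ≤ M * |s - s₀| * (K * |s - s₀|) := by
          apply mul_le_mul_of_nonneg_left hK (by positivity)
      _ ≤ M * K * ‖(s - s₀) * (s - s₀)‖ := by
          rw [Real.norm_eq_abs, abs_mul]; ring_nf; nlinarith [abs_nonneg (s - s₀)]
    have small : (fun s : ℝ => (s - s₀) * (s - s₀)) =o[nhds s₀] fun s => s - s₀ := by
      rw [Asymptotics.isLittleO_iff]
      intro ε hε
      filter_upwards [Metric.ball_mem_nhds s₀ hε] with s hs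
      have : |s - s₀| < ε := by simpa [Real.dist_eq] using Metric.mem_ball.mp hs
      rw [Real.norm_eq_abs, abs_mul, Real.norm_eq_abs]
      nlinarith [abs_nonneg (s - s₀)]
    exact big.trans_isLittleO small
  -- assemble
  have heq : ∀ s, ∫ z in c..(φ s), f z s
      = (∫ z in c..(φ s₀), f z s)
        + ((∫ z in (φ s₀)..(φ s), f z s₀) + ∫ z in (φ s₀)..(φ s), (f z s - f z s₀)) := by
    intro s
    have i1 : IntervalIntegrable (fun z => f z s) volume c (φ s₀) :=
      (hfz s).intervalIntegrable _ _
    have i2 : IntervalIntegrable (fun z => f z s) volume (φ s₀) (φ s) :=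
      (hfz s).intervalIntegrable _ _
    rw [← intervalIntegral.integral_add_adjacent_intervals i1 i2]
    congr 1
    rw [← intervalIntegral.integral_add (f := fun z => f z s₀) (g := fun z => f z s - f z s₀)
      ((hfz s₀).intervalIntegrable _ _)
      (((hfz s).sub (hfz s₀)).intervalIntegrable _ _)]
    simp
  have hsum := (hC1.add (hA2.add hB2)).congr_of_eventuallyEq
    (Eventually.of_forall heq)
  have hval : (∫ z in c..(φ s₀), pd z s₀) + (f (φ s₀) s₀ * φ' + 0)
      = f (φ s₀) s₀ * φ' + ∫ z in c..(φ s₀), deriv (fun s => f z s) s₀ := by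
    have : (fun z => deriv (fun s => f z s) s₀) = fun z => pd z s₀ :=
      funext fun z => (hpd z s₀).deriv
    rw [this, add_zero, add_comm]
  rw [← hval]
  exact hsum

end LeibnizAux

/-- Layer-averaged momentum balance: integrating the hydrostatic Euler momentum
equation `∂ₜu + ∂ₓ(u²) + ∂_z(uw) + ∂ₓp = 0`, with `p = g(η − z)`, over a fluid
layer `a(x,t) ≤ z ≤ b(x,t)` gives the layer momentum equation with interface
exchange terms `G_a`, `G_b`. -/
theorem layer_momentum_balance
    (g : ℝ) (hg : 0 < g)
    (u w : ℝ → ℝ → ℝ → ℝ)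
    (hu : ContDiff ℝ 1 fun p : ℝ × ℝ × ℝ => u p.1 p.2.1 p.2.2)
    (hw : ContDiff ℝ 1 fun p : ℝ × ℝ × ℝ => w p.1 p.2.1 p.2.2)
    (a b η : ℝ → ℝ → ℝ)
    (ha : ContDiff ℝ 1 fun p : ℝ × ℝ => a p.1 p.2)
    (hb : ContDiff ℝ 1 fun p : ℝ × ℝ => b p.1 p.2)
    (hη : ContDiff ℝ 1 fun p : ℝ × ℝ => η p.1 p.2)
    (hab : ∀ x t, a x t < b x t)
    (hmom : ∀ x t z, a x t ≤ z → z ≤ b x t →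
      deriv (fun τ => u x z τ) t + deriv (fun y => (u y z t) ^ 2) x
        + deriv (fun ζ => u x ζ t * w x ζ t) z
        + deriv (fun y => g * (η y t - z)) x = 0) :
    ∀ x t,
      deriv (fun τ => ∫ z in (a x τ)..(b x τ), u x z τ) t
        + deriv (fun y => ∫ z in (a y t)..(b y t), (u y z t) ^ 2) x
        + g * (b x t - a x t) * deriv (fun y => η y t) x
      = u x (b x t) t *
          (deriv (fun τ => b x τ) t
            + u x (b x t) t * deriv (fun y => b y t) x - w x (b x t) t)
        - u x (a x t) t *
          (deriv (fun τ => a x τ) t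
            + u x (a x t) t * deriv (fun y => a y t) x - w x (a x t) t) := by
  intro x t
  -- slice derivatives of the two-variable functions a, b, η
  have hDt : ∀ (F : ℝ → ℝ → ℝ), (ContDiff ℝ 1 fun p : ℝ × ℝ => F p.1 p.2) →
      HasDerivAt (fun τ => F x τ) (fderiv ℝ (fun p : ℝ × ℝ => F p.1 p.2) (x, t) (0, 1)) t := by
    intro F hF
    have h1 : HasDerivAt (fun τ : ℝ => ((x, τ) : ℝ × ℝ)) ((0 : ℝ), (1 : ℝ)) t :=
      (hasDerivAt_const _ _).prodMk (hasDerivAt_id _)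
    exact (hF.differentiable one_ne_zero (x, t)).hasFDerivAt.comp_hasDerivAt _ h1
  have hDx : ∀ (F : ℝ → ℝ → ℝ), (ContDiff ℝ 1 fun p : ℝ × ℝ => F p.1 p.2) →
      HasDerivAt (fun y => F y t) (fderiv ℝ (fun p : ℝ × ℝ => F p.1 p.2) (x, t) (1, 0)) x := by
    intro F hF
    have h1 : HasDerivAt (fun y : ℝ => ((y, t) : ℝ × ℝ)) ((1 : ℝ), (0 : ℝ)) x :=
      (hasDerivAt_id _).prodMk (hasDerivAt_const _ _)
    exact (hF.differentiable one_ne_zero (x, t)).hasFDerivAt.comp_hasDerivAt x h1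
  have hbt := hDt b hb
  have hat := hDt a ha
  have hbx := hDx b hb
  have hax := hDx a ha
  have hηx := hDx η hη
  -- slice derivatives of u, w in each of the three directions
  have hcurve : ∀ z : ℝ, Continuous fun ζ : ℝ => ((x, ζ, t) : ℝ × ℝ × ℝ) := fun _ =>
    continuous_const.prodMk (continuous_id.prodMk continuous_const)
  have hUt : ∀ z, HasDerivAt (fun τ => u x z τ)
      (fderiv ℝ (fun p : ℝ × ℝ × ℝ => u p.1 p.2.1 p.2.2) (x, z, t) ((0:ℝ), (0:ℝ), (1:ℝ))) t := by
    intro z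
    have h1 : HasDerivAt (fun τ : ℝ => ((x, z, τ) : ℝ × ℝ × ℝ)) ((0:ℝ), (0:ℝ), (1:ℝ)) t :=
      (hasDerivAt_const _ _).prodMk ((hasDerivAt_const _ _).prodMk (hasDerivAt_id _))
    exact (hu.differentiable one_ne_zero _).hasFDerivAt.comp_hasDerivAt t h1
  have hUx : ∀ z, HasDerivAt (fun y => u y z t)
      (fderiv ℝ (fun p : ℝ × ℝ × ℝ => u p.1 p.2.1 p.2.2) (x, z, t) ((1:ℝ), (0:ℝ), (0:ℝ))) x := by
    intro z
    have h1 : HasDerivAt (fun y : ℝ => ((y, z, t) : ℝ × ℝ × ℝ)) ((1:ℝ), (0:ℝ), (0:ℝ)) x :=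
      (hasDerivAt_id _).prodMk ((hasDerivAt_const _ _).prodMk (hasDerivAt_const _ _))
    exact (hu.differentiable one_ne_zero _).hasFDerivAt.comp_hasDerivAt x h1
  have hUz : ∀ ζ, HasDerivAt (fun ζ' => u x ζ' t)
      (fderiv ℝ (fun p : ℝ × ℝ × ℝ => u p.1 p.2.1 p.2.2) (x, ζ, t) ((0:ℝ), (1:ℝ), (0:ℝ))) ζ := by
    intro ζ
    have h1 : HasDerivAt (fun ζ' : ℝ => ((x, ζ', t) : ℝ × ℝ × ℝ)) ((0:ℝ), (1:ℝ), (0:ℝ)) ζ :=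
      (hasDerivAt_const _ _).prodMk ((hasDerivAt_id _).prodMk (hasDerivAt_const _ _))
    exact (hu.differentiable one_ne_zero _).hasFDerivAt.comp_hasDerivAt ζ h1
  have hWz : ∀ ζ, HasDerivAt (fun ζ' => w x ζ' t)
      (fderiv ℝ (fun p : ℝ × ℝ × ℝ => w p.1 p.2.1 p.2.2) (x, ζ, t) ((0:ℝ), (1:ℝ), (0:ℝ))) ζ := by
    intro ζ
    have h1 : HasDerivAt (fun ζ' : ℝ => ((x, ζ', t) : ℝ × ℝ × ℝ)) ((0:ℝ), (1:ℝ), (0:ℝ)) ζ :=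
      (hasDerivAt_const _ _).prodMk ((hasDerivAt_id _).prodMk (hasDerivAt_const _ _))
    exact (hw.differentiable one_ne_zero _).hasFDerivAt.comp_hasDerivAt ζ h1
  -- continuity helpers
  have cdir : ∀ v : ℝ × ℝ × ℝ, Continuous fun z : ℝ =>
      fderiv ℝ (fun p : ℝ × ℝ × ℝ => u p.1 p.2.1 p.2.2) (x, z, t) v := fun v =>
    ((hu.continuous_fderiv one_ne_zero).clm_apply continuous_const).comp (hcurve 0)
  have cdirw : ∀ v : ℝ × ℝ × ℝ, Continuous fun z : ℝ =>
      fderiv ℝ (fun p : ℝ × ℝ × ℝ => w p.1 p.2.1 p.2.2) (x, z, t) v := fun v =>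
    ((hw.continuous_fderiv one_ne_zero).clm_apply continuous_const).comp (hcurve 0)
  have cu : Continuous fun z => u x z t := hu.continuous.comp (hcurve 0)
  have cw : Continuous fun z => w x z t := hw.continuous.comp (hcurve 0)
  -- closed forms and continuity of the four terms of the momentum equation
  have eT1 : (fun z => deriv (fun τ => u x z τ) t)
      = fun z => fderiv ℝ (fun p : ℝ × ℝ × ℝ => u p.1 p.2.1 p.2.2) (x, z, t)
          ((0:ℝ), (0:ℝ), (1:ℝ)) := funext fun z => (hUt z).deriv
  have cT1 : Continuous fun z => deriv (fun τ => u x z τ) t := by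
    rw [eT1]; exact cdir _
  have eT2 : (fun z => deriv (fun y => (u y z t) ^ 2) x)
      = fun z => 2 * u x z t ^ 1 *
          fderiv ℝ (fun p : ℝ × ℝ × ℝ => u p.1 p.2.1 p.2.2) (x, z, t)
            ((1:ℝ), (0:ℝ), (0:ℝ)) := by
    funext z
    have := ((hUx z).fun_pow 2).deriv
    simpa using this
  have cT2 : Continuous fun z => deriv (fun y => (u y z t) ^ 2) x := by
    rw [eT2]
    exact (continuous_const.mul (cu.pow 1)).mul (cdir _)
  have hψ : ∀ ζ, HasDerivAt (fun ζ' => u x ζ' t * w x ζ' t)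
      (fderiv ℝ (fun p : ℝ × ℝ × ℝ => u p.1 p.2.1 p.2.2) (x, ζ, t) ((0:ℝ), (1:ℝ), (0:ℝ))
          * w x ζ t
        + u x ζ t *
          fderiv ℝ (fun p : ℝ × ℝ × ℝ => w p.1 p.2.1 p.2.2) (x, ζ, t) ((0:ℝ), (1:ℝ), (0:ℝ))) ζ :=
    fun ζ => (hUz ζ).mul (hWz ζ)
  have eT3 : (fun z => deriv (fun ζ => u x ζ t * w x ζ t) z)
      = fun ζ => fderiv ℝ (fun p : ℝ × ℝ × ℝ => u p.1 p.2.1 p.2.2) (x, ζ, t)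
            ((0:ℝ), (1:ℝ), (0:ℝ)) * w x ζ t
          + u x ζ t * fderiv ℝ (fun p : ℝ × ℝ × ℝ => w p.1 p.2.1 p.2.2) (x, ζ, t)
            ((0:ℝ), (1:ℝ), (0:ℝ)) := funext fun ζ => (hψ ζ).deriv
  have cT3 : Continuous fun z => deriv (fun ζ => u x ζ t * w x ζ t) z := by
    rw [eT3]
    exact ((cdir _).mul cw).add (cu.mul (cdirw _))
  have eT4 : (fun z : ℝ => deriv (fun y => g * (η y t - z)) x)
      = fun _ => g * fderiv ℝ (fun p : ℝ × ℝ => η p.1 p.2) (x, t) (1, 0) := by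
    funext z
    exact ((hηx.sub_const z).const_mul g).deriv
  have cT4 : Continuous fun z : ℝ => deriv (fun y => g * (η y t - z)) x := by
    rw [eT4]; exact continuous_const
  -- FTC for the vertical-flux term
  have i3 : ∫ z in (a x t)..(b x t), deriv (fun ζ => u x ζ t * w x ζ t) z
      = u x (b x t) t * w x (b x t) t - u x (a x t) t * w x (a x t) t := by
    rw [eT3]
    exact intervalIntegral.integral_eq_sub_of_hasDerivAt (fun ζ _ => hψ ζ)
      ((((cdir _).mul cw).add (cu.mul (cdirw _))).intervalIntegrable _ _)
  -- the pointwise momentum equation integrated over the layer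
  have hzero : ∫ z in (a x t)..(b x t),
      (deriv (fun τ => u x z τ) t + deriv (fun y => (u y z t) ^ 2) x
        + deriv (fun ζ => u x ζ t * w x ζ t) z
        + deriv (fun y => g * (η y t - z)) x) = 0 := by
    rw [intervalIntegral.integral_congr (g := fun _ => (0:ℝ))
      (fun z hz => by
        rw [Set.uIcc_of_le (hab x t).le] at hz
        exact hmom x t z hz.1 hz.2)]
    simp
  have h4 : ∫ z in (a x t)..(b x t), deriv (fun y => g * (η y t - z)) x
      = (b x t - a x t) * (g * fderiv ℝ (fun p : ℝ × ℝ => η p.1 p.2) (x, t) (1, 0)) := by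
    rw [eT4]
    rw [intervalIntegral.integral_const, smul_eq_mul]
  have key : (∫ z in (a x t)..(b x t), deriv (fun τ => u x z τ) t)
      + (∫ z in (a x t)..(b x t), deriv (fun y => (u y z t) ^ 2) x)
      + (∫ z in (a x t)..(b x t), deriv (fun ζ => u x ζ t * w x ζ t) z)
      + (b x t - a x t) * (g * fderiv ℝ (fun p : ℝ × ℝ => η p.1 p.2) (x, t) (1, 0)) = 0 := by
    rw [← h4,
      ← intervalIntegral.integral_add (cT1.intervalIntegrable _ _) (cT2.intervalIntegrable _ _),
      ← intervalIntegral.integral_add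
        (f := fun z => deriv (fun τ => u x z τ) t + deriv (fun y => (u y z t) ^ 2) x)
        (g := fun z => deriv (fun ζ => u x ζ t * w x ζ t) z) ((cT1.add cT2).intervalIntegrable _ _)
        (cT3.intervalIntegrable _ _),
      ← intervalIntegral.integral_add
        (f := fun z => deriv (fun τ => u x z τ) t + deriv (fun y => (u y z t) ^ 2) x
          + deriv (fun ζ => u x ζ t * w x ζ t) z)
        (g := fun z => deriv (fun y => g * (η y t - z)) x)
        (((cT1.add cT2).add cT3).intervalIntegrable _ _)
        (cT4.intervalIntegrable _ _)]
    exact hzero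
  -- Leibniz for the time derivative
  have hf1 : ContDiff ℝ 1 fun p : ℝ × ℝ => u x p.1 p.2 :=
    hu.comp (contDiff_const.prodMk contDiff_id)
  have hH1b := leibniz_aux (fun z τ => u x z τ) hf1 0 hbt
  have hH1a := leibniz_aux (fun z τ => u x z τ) hf1 0 hat
  have heqt : ∀ τ, ∫ z in (a x τ)..(b x τ), u x z τ
      = (∫ z in (0:ℝ)..(b x τ), u x z τ) - ∫ z in (0:ℝ)..(a x τ), u x z τ := by
    intro τ
    have hc : Continuous fun z => u x z τ :=
      hu.continuous.comp (continuous_const.prodMk (continuous_id.prodMk continuous_const))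
    have := intervalIntegral.integral_add_adjacent_intervals (μ := volume)
      (hc.intervalIntegrable 0 (a x τ)) (hc.intervalIntegrable (a x τ) (b x τ))
    linarith
  have hH1 : HasDerivAt (fun τ => ∫ z in (a x τ)..(b x τ), u x z τ)
      ((u x (b x t) t * fderiv ℝ (fun p : ℝ × ℝ => b p.1 p.2) (x, t) (0, 1)
          + ∫ z in (0:ℝ)..(b x t), deriv (fun τ => u x z τ) t)
        - (u x (a x t) t * fderiv ℝ (fun p : ℝ × ℝ => a p.1 p.2) (x, t) (0, 1)
          + ∫ z in (0:ℝ)..(a x t), deriv (fun τ => u x z τ) t)) t :=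
    (hH1b.sub hH1a).congr_of_eventuallyEq (Filter.Eventually.of_forall heqt)
  -- Leibniz for the horizontal derivative
  have hf2 : ContDiff ℝ 1 fun p : ℝ × ℝ => (u p.2 p.1 t) ^ 2 :=
    (hu.comp (contDiff_snd.prodMk (contDiff_fst.prodMk contDiff_const))).pow 2
  have hH2b := leibniz_aux (fun z y => (u y z t) ^ 2) hf2 0 hbx
  have hH2a := leibniz_aux (fun z y => (u y z t) ^ 2) hf2 0 hax
  have heqx : ∀ y, ∫ z in (a y t)..(b y t), (u y z t) ^ 2
      = (∫ z in (0:ℝ)..(b y t), (u y z t) ^ 2) - ∫ z in (0:ℝ)..(a y t), (u y z t) ^ 2 := by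
    intro y
    have hc : Continuous fun z => (u y z t) ^ 2 :=
      (hu.continuous.comp
        (continuous_const.prodMk (continuous_id.prodMk continuous_const))).pow 2
    have := intervalIntegral.integral_add_adjacent_intervals (μ := volume)
      (hc.intervalIntegrable 0 (a y t)) (hc.intervalIntegrable (a y t) (b y t))
    linarith
  have hH2 : HasDerivAt (fun y => ∫ z in (a y t)..(b y t), (u y z t) ^ 2)
      (((u x (b x t) t) ^ 2 * fderiv ℝ (fun p : ℝ × ℝ => b p.1 p.2) (x, t) (1, 0)
          + ∫ z in (0:ℝ)..(b x t), deriv (fun y => (u y z t) ^ 2) x)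
        - ((u x (a x t) t) ^ 2 * fderiv ℝ (fun p : ℝ × ℝ => a p.1 p.2) (x, t) (1, 0)
          + ∫ z in (0:ℝ)..(a x t), deriv (fun y => (u y z t) ^ 2) x)) x :=
    (hH2b.sub hH2a).congr_of_eventuallyEq (Filter.Eventually.of_forall heqx)
  -- merge the split integrals back
  have m1 : (∫ z in (0:ℝ)..(a x t), deriv (fun τ => u x z τ) t)
      + (∫ z in (a x t)..(b x t), deriv (fun τ => u x z τ) t)
      = ∫ z in (0:ℝ)..(b x t), deriv (fun τ => u x z τ) t :=
    intervalIntegral.integral_add_adjacent_intervals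
      (cT1.intervalIntegrable _ _) (cT1.intervalIntegrable _ _)
  have m2 : (∫ z in (0:ℝ)..(a x t), deriv (fun y => (u y z t) ^ 2) x)
      + (∫ z in (a x t)..(b x t), deriv (fun y => (u y z t) ^ 2) x)
      = ∫ z in (0:ℝ)..(b x t), deriv (fun y => (u y z t) ^ 2) x :=
    intervalIntegral.integral_add_adjacent_intervals
      (cT2.intervalIntegrable _ _) (cT2.intervalIntegrable _ _)
  -- finish
  rw [hH1.deriv, hH2.deriv, hbt.deriv, hat.deriv, hbx.deriv, hax.deriv, hηx.deriv]
  linear_combination -m1 - m2 + key - i3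
end

section
/- Fix N≥1, layer fractions l_α>0 with Σ_{α=1}^N l_α = 1, and g>0. Let H>0, u_1,…,u_N, z_b, p^a be C¹ functions of (x,t); set h_α = l_α H, η = H + z_b, define G_{α+1/2} = Σ_{j=1}^{α}(∂ₜh_j + ∂ₓ(h_j u_j)) for α=1,…,N−1 with G_{1/2} = G_{N+1/2} = 0, and let u_{α+1/2}(x,t), α=1,…,N−1, be arbitrary C⁰ interface velocity functions. Suppose the global continuity equation ∂ₜH + ∂ₓΣ_{α=1}^N h_α u_α = 0 and, for each α, the momentum equation ∂ₜ(h_α u_α) + ∂ₓ(h_α u_α² + (g/(2 l_α)) h_α²) = −h_α ∂ₓp^a − g h_α ∂ₓz_b + u_{α+1/2} G_{α+1/2} − u_{α−1/2} G_{α−1/2} hold. Then, with the layer energies E_α = h_α u_α²/2 + g h_α(η+z_b)/2 + h_α p^a, the energy balance ∂ₜΣ_{α=1}^N E_α + ∂ₓΣ_{α=1}^N u_α(E_α + (g/2) h_α H) = H∂ₜp^a + gH∂ₜz_b + Σ_{α=1}^{N−1} G_{α+1/2}·(u_{α+1/2} − (u_α+u_{α+1})/2)·(u_α − u_{α+1})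 holds. -/
theorem hasDerivAt_congr_deriv {f : ℝ → ℝ} {d D x : ℝ} (h : HasDerivAt f d x) (e : d = D) :
    HasDerivAt f D x := e ▸ h

theorem abel_aux (N : ℕ) (Γ w : ℕ → ℝ) (v : Fin (N + 1) → ℝ)
    (h0 : Γ 0 = 0) (htop : Γ (N + 1) = 0) :
    ∑ α : Fin (N + 1),
      (v α * (w ((α : ℕ) + 1) * Γ ((α : ℕ) + 1)) - v α * (w (α : ℕ) * Γ (α : ℕ))
        - (Γ ((α : ℕ) + 1) - Γ (α : ℕ)) * (v α ^ 2 / 2))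
    = ∑ β : Fin N,
        Γ ((β : ℕ) + 1) * (w ((β : ℕ) + 1) - (v β.castSucc + v β.succ) / 2)
          * (v β.castSucc - v β.succ) := by
  set V : ℕ → ℝ := fun k => if h : k < N + 1 then v ⟨k, h⟩ else 0 with hV
  have hv : ∀ α : Fin (N + 1), v α = V (α : ℕ) := by
    intro α; simp only [hV]; rw [dif_pos α.isLt]
  have hL : ∑ α : Fin (N + 1),
      (v α * (w ((α : ℕ) + 1) * Γ ((α : ℕ) + 1)) - v α * (w (α : ℕ) * Γ (α : ℕ))
        - (Γ ((α : ℕ) + 1) - Γ (α : ℕ)) * (v α ^ 2 / 2))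
      = ∑ k ∈ Finset.range (N + 1),
        (V k * (w (k + 1) * Γ (k + 1)) - V k * (w k * Γ k)
          - (Γ (k + 1) - Γ k) * (V k ^ 2 / 2)) := by
    rw [← Fin.sum_univ_eq_sum_range]
    exact Finset.sum_congr rfl fun α _ => by rw [hv]
  have hR : ∑ β : Fin N,
      Γ ((β : ℕ) + 1) * (w ((β : ℕ) + 1) - (v β.castSucc + v β.succ) / 2)
        * (v β.castSucc - v β.succ)
      = ∑ k ∈ Finset.range N,
        Γ (k + 1) * (w (k + 1) - (V k + V (k + 1)) / 2) * (V k - V (k + 1)) := by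
    rw [← Fin.sum_univ_eq_sum_range]
    refine Finset.sum_congr rfl fun β _ => by
      rw [hv β.castSucc, hv β.succ, Fin.coe_castSucc, Fin.val_succ]
  rw [hL, hR]
  have split : ∑ k ∈ Finset.range (N + 1),
      (V k * (w (k + 1) * Γ (k + 1)) - V k * (w k * Γ k)
        - (Γ (k + 1) - Γ k) * (V k ^ 2 / 2))
      = (∑ k ∈ Finset.range (N + 1), Γ (k + 1) * (V k * w (k + 1) - V k ^ 2 / 2))
        - ∑ k ∈ Finset.range (N + 1), Γ k * (V k * w k - V k ^ 2 / 2) := by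
    rw [← Finset.sum_sub_distrib]
    exact Finset.sum_congr rfl fun k _ => by ring
  rw [split, Finset.sum_range_succ, htop, Finset.sum_range_succ', h0]
  simp only [mul_zero, zero_mul, add_zero]
  rw [← Finset.sum_sub_distrib]
  exact Finset.sum_congr rfl fun k _ => by ring

/-- Energy balance for smooth solutions of the inviscid multilayer
Saint-Venant system with mass exchanges. There are `N + 1` layers indexed by
`Fin (N+1)` (0-based); the paper's interior interface `α + 1/2`
(α = 1,…,N_layers−1) corresponds to `β : Fin N`, sitting between layers
`β.castSucc` and `β.succ`, with exchange term `G (β+1)` and interface velocity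
`uhalf (β+1)`. -/
theorem multilayer_energy_balance
    (N : ℕ) (g : ℝ) (hg : 0 < g)
    (l : Fin (N + 1) → ℝ) (hl : ∀ α, 0 < l α) (hlsum : ∑ α, l α = 1)
    (H pa zb : ℝ → ℝ → ℝ) (u : Fin (N + 1) → ℝ → ℝ → ℝ)
    (hH : ContDiff ℝ 1 fun p : ℝ × ℝ => H p.1 p.2) (hHpos : ∀ x t, 0 < H x t)
    (hu : ∀ α, ContDiff ℝ 1 fun p : ℝ × ℝ => u α p.1 p.2)
    (hpa : ContDiff ℝ 1 fun p : ℝ × ℝ => pa p.1 p.2)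
    (hzb : ContDiff ℝ 1 fun p : ℝ × ℝ => zb p.1 p.2)
    (uhalf : ℕ → ℝ → ℝ → ℝ)
    (huhalf : ∀ k, Continuous fun p : ℝ × ℝ => uhalf k p.1 p.2)
    (G : ℕ → ℝ → ℝ → ℝ)
    (hG : ∀ k x t, G k x t =
      ∑ j ∈ Finset.univ.filter (fun j : Fin (N + 1) => (j : ℕ) < k),
        (deriv (fun τ => l j * H x τ) t + deriv (fun y => l j * H y t * u j y t) x))
    (hcont : ∀ x t, deriv (fun τ => H x τ) t
      + deriv (fun y => ∑ α, l α * H y t * u α y t) x = 0)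
    (hmom : ∀ α : Fin (N + 1), ∀ x t,
      deriv (fun τ => l α * H x τ * u α x τ) t
        + deriv (fun y => l α * H y t * (u α y t) ^ 2
            + g / (2 * l α) * (l α * H y t) ^ 2) x
      = -(l α * H x t) * deriv (fun y => pa y t) x
        - g * (l α * H x t) * deriv (fun y => zb y t) x
        + uhalf ((α : ℕ) + 1) x t * G ((α : ℕ) + 1) x t
        - uhalf (α : ℕ) x t * G (α : ℕ) x t)
    (E : Fin (N + 1) → ℝ → ℝ → ℝ)
    (hE : ∀ α y t, E α y t =
      l α * H y t * (u α y t) ^ 2 / 2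
        + g * (l α * H y t) * ((H y t + zb y t) + zb y t) / 2
        + l α * H y t * pa y t) :
    ∀ x t,
      deriv (fun τ => ∑ α, E α x τ) t
        + deriv (fun y => ∑ α, u α y t * (E α y t + g / 2 * (l α * H y t) * H y t)) x
      = H x t * deriv (fun τ => pa x τ) t + g * H x t * deriv (fun τ => zb x τ) t
        + ∑ β : Fin N,
            G ((β : ℕ) + 1) x t
              * (uhalf ((β : ℕ) + 1) x t
                  - (u β.castSucc x t + u β.succ x t) / 2)
              * (u β.castSucc x t - u β.succ x t) := by
  intro x t
  have dline_t : ∀ (f : ℝ → ℝ → ℝ), ContDiff ℝ 1 (fun p : ℝ × ℝ => f p.1 p.2) →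
      DifferentiableAt ℝ (fun τ => f x τ) t := fun f hf =>
    (hf.differentiable one_ne_zero (x, t)).comp t ((differentiableAt_const x).prodMk differentiableAt_id)
  have dline_x : ∀ (f : ℝ → ℝ → ℝ), ContDiff ℝ 1 (fun p : ℝ × ℝ => f p.1 p.2) →
      DifferentiableAt ℝ (fun y => f y t) x := fun f hf =>
    ((hf.differentiable one_ne_zero (x, t)).comp x (DifferentiableAt.prodMk differentiableAt_id (differentiableAt_const t)) :
      DifferentiableAt ℝ ((fun p : ℝ × ℝ => f p.1 p.2) ∘ fun y => (id y, t)) x)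
  obtain ⟨At, hAt⟩ : ∃ a, HasDerivAt (fun τ => H x τ) a t := ⟨_, (dline_t H hH).hasDerivAt⟩
  obtain ⟨Ax, hAx⟩ : ∃ a, HasDerivAt (fun y => H y t) a x := ⟨_, (dline_x H hH).hasDerivAt⟩
  obtain ⟨Pt, hPt⟩ : ∃ a, HasDerivAt (fun τ => pa x τ) a t := ⟨_, (dline_t pa hpa).hasDerivAt⟩
  obtain ⟨Px, hPx⟩ : ∃ a, HasDerivAt (fun y => pa y t) a x := ⟨_, (dline_x pa hpa).hasDerivAt⟩
  obtain ⟨Zt, hZt⟩ : ∃ a, HasDerivAt (fun τ => zb x τ) a t := ⟨_, (dline_t zb hzb).hasDerivAt⟩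
  obtain ⟨Zx, hZx⟩ : ∃ a, HasDerivAt (fun y => zb y t) a x := ⟨_, (dline_x zb hzb).hasDerivAt⟩
  obtain ⟨vt, hvt⟩ : ∃ f : Fin (N + 1) → ℝ, ∀ α, HasDerivAt (fun τ => u α x τ) (f α) t :=
    ⟨_, fun α => (dline_t (u α) (hu α)).hasDerivAt⟩
  obtain ⟨vx, hvx⟩ : ∃ f : Fin (N + 1) → ℝ, ∀ α, HasDerivAt (fun y => u α y t) (f α) x :=
    ⟨_, fun α => (dline_x (u α) (hu α)).hasDerivAt⟩
  -- scalar form of the momentum equations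
  have hmom' : ∀ α : Fin (N + 1),
      l α * (At * u α x t + H x t * vt α)
        + (l α * (Ax * u α x t ^ 2 + 2 * H x t * u α x t * vx α) + g * l α * (H x t * Ax))
      = -(l α * H x t) * Px - g * (l α * H x t) * Zx
        + uhalf ((α : ℕ) + 1) x t * G ((α : ℕ) + 1) x t
        - uhalf (α : ℕ) x t * G (α : ℕ) x t := by
    intro α
    have hlne : l α ≠ 0 := (hl α).ne'
    have e1 : deriv (fun τ => l α * H x τ * u α x τ) t
        = l α * (At * u α x t + H x t * vt α) :=
      (hasDerivAt_congr_deriv ((hAt.const_mul (l α)).mul (hvt α)) (by ring)).deriv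
    have e2 : deriv (fun y => l α * H y t * (u α y t) ^ 2
          + g / (2 * l α) * (l α * H y t) ^ 2) x
        = l α * (Ax * u α x t ^ 2 + 2 * H x t * u α x t * vx α) + g * l α * (H x t * Ax) :=
      (hasDerivAt_congr_deriv
        (((hAx.const_mul (l α)).fun_mul ((hvx α).fun_pow 2)).fun_add
          (((hAx.const_mul (l α)).fun_pow 2).const_mul (g / (2 * l α))))
        (by field_simp; ring)).deriv
    have h := hmom α x t
    rw [e1, e2, hPx.deriv, hZx.deriv] at h
    exact h
  -- scalar form of the exchange terms
  have hG' : ∀ k, G k x t = ∑ j ∈ Finset.univ.filter (fun j : Fin (N + 1) => (j : ℕ) < k),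
      l j * (At + Ax * u j x t + H x t * vx j) := by
    intro k
    rw [hG k x t]
    refine Finset.sum_congr rfl fun j _ => ?_
    have e1 : deriv (fun τ => l j * H x τ) t = l j * At := (hAt.const_mul (l j)).deriv
    have e2 : deriv (fun y => l j * H y t * u j y t) x
        = l j * Ax * u j x t + l j * H x t * vx j :=
      (hasDerivAt_congr_deriv ((hAx.const_mul (l j)).mul (hvx j)) (by ring)).deriv
    rw [e1, e2]; ring
  -- scalar form of the continuity equation
  have hcont' : At + ∑ α, (l α * Ax * u α x t + l α * H x t * vx α) = 0 := by
    have e2 : deriv (fun y => ∑ α, l α * H y t * u α y t) x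
        = ∑ α, (l α * Ax * u α x t + l α * H x t * vx α) :=
      (HasDerivAt.fun_sum fun α _ =>
        hasDerivAt_congr_deriv ((hAx.const_mul (l α)).fun_mul (hvx α)) (by ring)).deriv
    have h := hcont x t
    rw [hAt.deriv, e2] at h
    exact h
  have hmsum : ∑ α, l α * (At + Ax * u α x t + H x t * vx α) = 0 := by
    have h1 : ∑ α, l α * (At + Ax * u α x t + H x t * vx α)
        = (∑ α, l α) * At + ∑ α, (l α * Ax * u α x t + l α * H x t * vx α) := by
      rw [Finset.sum_mul, ← Finset.sum_add_distrib]
      exact Finset.sum_congr rfl fun α _ => by ring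
    rw [h1, hlsum]; linarith [hcont']
  have hG0 : G 0 x t = 0 := by rw [hG']; simp
  have hGsucc : ∀ α : Fin (N + 1), G ((α : ℕ) + 1) x t
      = G (α : ℕ) x t + l α * (At + Ax * u α x t + H x t * vx α) := by
    intro α
    rw [hG', hG']
    have hfil : Finset.univ.filter (fun j : Fin (N + 1) => (j : ℕ) < (α : ℕ) + 1)
        = insert α (Finset.univ.filter (fun j : Fin (N + 1) => (j : ℕ) < (α : ℕ))) := by
      ext j
      simp [Nat.lt_succ_iff_lt_or_eq, Fin.ext_iff, or_comm, le_iff_eq_or_lt]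
    rw [hfil, Finset.sum_insert (by simp)]
    ring
  have hGtop : G (N + 1) x t = 0 := by
    rw [hG']
    have hfil : Finset.univ.filter (fun j : Fin (N + 1) => (j : ℕ) < N + 1) = Finset.univ := by
      ext j; simpa using j.isLt
    rw [hfil]; exact hmsum
  -- derivative of the total energy in time
  have eT : deriv (fun τ => ∑ α, E α x τ) t
      = ∑ α, (l α * (At * u α x t ^ 2 + 2 * H x t * u α x t * vt α) / 2
          + g * l α * (At * (H x t + 2 * zb x t) + H x t * (At + 2 * Zt)) / 2
          + l α * (At * pa x t + H x t * Pt)) := by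
    have hfun : (fun τ => ∑ α, E α x τ)
        = fun τ => ∑ α, (l α * H x τ * u α x τ ^ 2 / 2
            + g * (l α * H x τ) * ((H x τ + zb x τ) + zb x τ) / 2 + l α * H x τ * pa x τ) :=
      funext fun τ => Finset.sum_congr rfl fun α _ => hE α x τ
    rw [hfun]
    exact (HasDerivAt.fun_sum fun α _ =>
      hasDerivAt_congr_deriv
        (((((hAt.const_mul (l α)).fun_mul ((hvt α).fun_pow 2)).div_const 2).fun_add
          ((((hAt.const_mul (l α)).const_mul g).fun_mul ((hAt.fun_add hZt).fun_add hZt)).div_const 2)).fun_add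
          ((hAt.const_mul (l α)).fun_mul hPt))
        (by ring)).deriv
  -- derivative of the total energy flux in space
  have eX : deriv (fun y => ∑ α, u α y t * (E α y t + g / 2 * (l α * H y t) * H y t)) x
      = ∑ α, (l α * (Ax * u α x t ^ 3 + 3 * H x t * u α x t ^ 2 * vx α) / 2
          + g * l α * ((Ax * u α x t + H x t * vx α) * (H x t + zb x t)
              + H x t * u α x t * (Ax + Zx))
          + l α * ((Ax * u α x t + H x t * vx α) * pa x t + H x t * u α x t * Px)) := by
    have hfun : (fun y => ∑ α, u α y t * (E α y t + g / 2 * (l α * H y t) * H y t))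
        = fun y => ∑ α, u α y t * ((l α * H y t * u α y t ^ 2 / 2
            + g * (l α * H y t) * ((H y t + zb y t) + zb y t) / 2 + l α * H y t * pa y t)
            + g / 2 * (l α * H y t) * H y t) :=
      funext fun y => Finset.sum_congr rfl fun α _ => by rw [hE]
    rw [hfun]
    exact (HasDerivAt.fun_sum fun α _ =>
      hasDerivAt_congr_deriv
        ((hvx α).fun_mul
          ((((((hAx.const_mul (l α)).fun_mul ((hvx α).fun_pow 2)).div_const 2).fun_add
            ((((hAx.const_mul (l α)).const_mul g).fun_mul ((hAx.fun_add hZx).fun_add hZx)).div_const 2)).fun_add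
            ((hAx.const_mul (l α)).fun_mul hPx)).fun_add
            (((hAx.const_mul (l α)).const_mul (g / 2)).fun_mul hAx)))
        (by ring)).deriv
  -- per-layer energy identity
  have key : ∀ α : Fin (N + 1),
      (l α * (At * u α x t ^ 2 + 2 * H x t * u α x t * vt α) / 2
          + g * l α * (At * (H x t + 2 * zb x t) + H x t * (At + 2 * Zt)) / 2
          + l α * (At * pa x t + H x t * Pt))
        + (l α * (Ax * u α x t ^ 3 + 3 * H x t * u α x t ^ 2 * vx α) / 2
          + g * l α * ((Ax * u α x t + H x t * vx α) * (H x t + zb x t)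
              + H x t * u α x t * (Ax + Zx))
          + l α * ((Ax * u α x t + H x t * vx α) * pa x t + H x t * u α x t * Px))
      = l α * (H x t * Pt + g * (H x t * Zt))
        + (G ((α : ℕ) + 1) x t - G (α : ℕ) x t) * (pa x t + g * (H x t + zb x t))
        + (u α x t * (uhalf ((α : ℕ) + 1) x t * G ((α : ℕ) + 1) x t)
            - u α x t * (uhalf (α : ℕ) x t * G (α : ℕ) x t)
            - (G ((α : ℕ) + 1) x t - G (α : ℕ) x t) * (u α x t ^ 2 / 2)) := by
    intro α
    linear_combination u α x t * hmom' α
      - (pa x t + g * (H x t + zb x t) - u α x t ^ 2 / 2) * hGsucc α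
  have lsum : ∀ c : ℝ, ∑ α : Fin (N + 1), l α * c = c := fun c => by
    rw [← Finset.sum_mul, hlsum, one_mul]
  have htel : ∑ α : Fin (N + 1),
      (G ((α : ℕ) + 1) x t - G (α : ℕ) x t) * (pa x t + g * (H x t + zb x t)) = 0 := by
    rw [← Finset.sum_mul]
    have h1 : ∑ α : Fin (N + 1), (G ((α : ℕ) + 1) x t - G (α : ℕ) x t)
        = ∑ k ∈ Finset.range (N + 1), (G (k + 1) x t - G k x t) :=
      Fin.sum_univ_eq_sum_range (fun k => G (k + 1) x t - G k x t) (N + 1)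
    rw [h1, Finset.sum_range_sub (fun k => G k x t), hGtop, hG0, sub_zero, zero_mul]
  have habel : ∑ α : Fin (N + 1),
      (u α x t * (uhalf ((α : ℕ) + 1) x t * G ((α : ℕ) + 1) x t)
        - u α x t * (uhalf (α : ℕ) x t * G (α : ℕ) x t)
        - (G ((α : ℕ) + 1) x t - G (α : ℕ) x t) * (u α x t ^ 2 / 2))
      = ∑ β : Fin N,
          G ((β : ℕ) + 1) x t
            * (uhalf ((β : ℕ) + 1) x t - (u β.castSucc x t + u β.succ x t) / 2)
            * (u β.castSucc x t - u β.succ x t) :=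
    abel_aux N (fun k => G k x t) (fun k => uhalf k x t) (fun α => u α x t) hG0 hGtop
  rw [eT, eX, hPt.deriv, hZt.deriv, ← Finset.sum_add_distrib,
    Finset.sum_congr rfl (fun α _ => key α), Finset.sum_add_distrib, Finset.sum_add_distrib,
    lsum, htel, habel]
  ring
end

section
/- Under the same hypotheses, if in addition the interface velocities are chosen by upwinding according to the sign of the mass exchange, i.e. u_{α+1/2}(x,t) = u_{α+1}(x,t) when G_{α+1/2}(x,t) ≥ 0 and u_{α+1/2}(x,t) = u_α(x,t) when G_{α+1/2}(x,t) < 0, then the exchange contribution equals −Σ_{α=1}^{N−1} |G_{α+1/2}|·(u_{α+1} − u_α)²/2 ≤ 0, and consequently smooth solutions satisfy the energy dissipation inequality ∂ₜΣ_{α=1}^N E_α + ∂ₓΣ_{α=1}^N u_α(E_α + (g/2) h_α H) ≤ H∂ₜp^a + gH∂ₜz_b. -/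
open Fin.NatCast

lemma myslice_t {F : ℝ → ℝ → ℝ} (hF : ContDiff ℝ 1 fun p : ℝ × ℝ => F p.1 p.2) (x : ℝ) :
    Differentiable ℝ (fun τ => F x τ) :=
  (hF.differentiable one_ne_zero).comp ((differentiable_const x).prodMk differentiable_id)

lemma myslice_x {F : ℝ → ℝ → ℝ} (hF : ContDiff ℝ 1 fun p : ℝ × ℝ => F p.1 p.2) (t : ℝ) :
    Differentiable ℝ (fun y => F y t) :=
  (hF.differentiable one_ne_zero).comp (differentiable_id.prodMk (differentiable_const t))

lemma HasDerivAt.congr_val {f : ℝ → ℝ} {v v' x : ℝ} (h : HasDerivAt f v x) (e : v = v') :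
    HasDerivAt f v' x := e ▸ h

lemma mytele (n : ℕ) (v A : ℕ → ℝ) :
    ∑ i ∈ Finset.range (n+1), v i * (A (i+1) - A i)
      = v n * A (n+1) - v 0 * A 0 - ∑ β ∈ Finset.range n, (v (β+1) - v β) * A (β+1) := by
  induction n with
  | zero => simp; ring
  | succ n ih =>
    rw [Finset.sum_range_succ, ih, Finset.sum_range_succ]
    ring

lemma abstract_calc (N : ℕ) (g c ct cx P Pt Px Z Zt Zx : ℝ)
    (l v vt vx : ℕ → ℝ) (w Gv : ℕ → ℝ)
    (hlsum : ∑ i ∈ Finset.range (N+1), l i = 1)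
    (hcont : ct + ∑ i ∈ Finset.range (N+1), (l i * cx * v i + l i * c * vx i) = 0)
    (hmom : ∀ i < N+1,
      (l i * ct * v i + l i * c * vt i)
        + (l i * cx * (v i)^2 + l i * c * (2 * v i * vx i) + g * l i * c * cx)
      = -(l i * c) * Px - g * (l i * c) * Zx + w (i+1) * Gv (i+1) - w i * Gv i)
    (hGv : ∀ k ≤ N+1, Gv k = ∑ i ∈ Finset.range k, (l i * ct + (l i * cx * v i + l i * c * vx i))) :
    ∑ i ∈ Finset.range (N+1),
        (l i * ct * (v i)^2 / 2 + l i * c * v i * vt i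
          + g * l i * (c * ct + ct * Z + c * Zt) + l i * (ct * P + c * Pt))
      + ∑ i ∈ Finset.range (N+1),
        (l i * cx * (v i)^3 / 2 + 3/2 * l i * c * (v i)^2 * vx i
          + g * l i * ((cx * v i + c * vx i) * (c + Z) + c * v i * (cx + Zx))
          + l i * ((cx * v i + c * vx i) * P + c * v i * Px))
      = c * Pt + g * c * Zt
        + ∑ β ∈ Finset.range N,
            Gv (β+1) * (w (β+1) - (v β + v (β+1))/2) * (v β - v (β+1)) := by
  have hGdiff : ∀ i < N+1, Gv (i+1) - Gv i
      = l i * ct + (l i * cx * v i + l i * c * vx i) := by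
    intro i hi
    rw [hGv (i+1) hi, hGv i (le_of_lt hi), Finset.sum_range_succ]
    ring
  have hG0 : Gv 0 = 0 := by rw [hGv 0 (by omega)]; simp
  have hs : ∑ i ∈ Finset.range (N+1), (l i * cx * v i + l i * c * vx i) = -ct := by
    linarith
  have hGN : Gv (N+1) = 0 := by
    rw [hGv (N+1) le_rfl, Finset.sum_add_distrib, ← Finset.sum_mul, hlsum, hs]
    ring
  set A : ℕ → ℝ := fun i =>
    l i * (ct * P + c * Pt) + g * l i * (c * ct + ct * Z + c * Zt)
      + (g * (c + Z) + P) * (l i * cx * v i + l i * c * vx i) with hA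
  set R : ℕ → ℝ := fun i =>
    v i * (w (i+1) * Gv (i+1) - w i * Gv i) - (v i)^2/2 * (Gv (i+1) - Gv i) with hR
  have hper : ∀ i ∈ Finset.range (N+1),
      (l i * ct * (v i)^2 / 2 + l i * c * v i * vt i
          + g * l i * (c * ct + ct * Z + c * Zt) + l i * (ct * P + c * Pt))
        + (l i * cx * (v i)^3 / 2 + 3/2 * l i * c * (v i)^2 * vx i
          + g * l i * ((cx * v i + c * vx i) * (c + Z) + c * v i * (cx + Zx))
          + l i * ((cx * v i + c * vx i) * P + c * v i * Px))
      = A i + R i := by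
    intro i hi
    rw [Finset.mem_range] at hi
    have h1 := hmom i hi
    have h2 := hGdiff i hi
    simp only [hA, hR]
    linear_combination v i * h1 + (v i)^2/2 * h2
  have hsumA : ∑ i ∈ Finset.range (N+1), A i = c * Pt + g * c * Zt := by
    have e : ∀ i ∈ Finset.range (N+1), A i
        = (ct * P + c * Pt + g * (c * ct + ct * Z + c * Zt)) * l i
          + (g * (c + Z) + P) * (l i * cx * v i + l i * c * vx i) := by
      intro i _; simp only [hA]; ring
    rw [Finset.sum_congr rfl e, Finset.sum_add_distrib, ← Finset.mul_sum, ← Finset.mul_sum,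
      hlsum, hs]
    ring
  have hsumR : ∑ i ∈ Finset.range (N+1), R i
      = ∑ β ∈ Finset.range N,
          Gv (β+1) * (w (β+1) - (v β + v (β+1))/2) * (v β - v (β+1)) := by
    have e1 : ∑ i ∈ Finset.range (N+1), R i
        = ∑ i ∈ Finset.range (N+1), v i * ((fun k => w k * Gv k) (i+1) - (fun k => w k * Gv k) i)
          - ∑ i ∈ Finset.range (N+1), (fun j => (v j)^2/2) i * (Gv (i+1) - Gv i) := by
      rw [← Finset.sum_sub_distrib]
    rw [e1, mytele N v (fun k => w k * Gv k), mytele N (fun j => (v j)^2/2) Gv, hG0, hGN]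
    have e3 : ∑ β ∈ Finset.range N,
          Gv (β+1) * (w (β+1) - (v β + v (β+1))/2) * (v β - v (β+1))
        = ∑ β ∈ Finset.range N,
            (((v (β+1))^2/2 - (v β)^2/2) * Gv (β+1)
              - (v (β+1) - v β) * (w (β+1) * Gv (β+1))) :=
      Finset.sum_congr rfl (fun β _ => by ring)
    rw [e3, Finset.sum_sub_distrib]
    ring
  calc _ = ∑ i ∈ Finset.range (N+1), (A i + R i) := by
        rw [← Finset.sum_add_distrib, Finset.sum_congr rfl hper]
    _ = _ := by rw [Finset.sum_add_distrib, hsumA, hsumR]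
/-- With upwinded interface velocities, the exchange contribution in the energy
balance of the inviscid multilayer Saint-Venant system equals
`−∑ |G_{α+1/2}|·(u_{α+1} − u_α)²/2 ≤ 0`, hence smooth solutions satisfy the
energy dissipation inequality. Layers are indexed by `Fin (N+1)` (0-based);
the interior interface `β : Fin N` sits between layers `β.castSucc` and
`β.succ`. -/
theorem multilayer_energy_dissipation_upwind
    (N : ℕ) (g : ℝ) (hg : 0 < g)
    (l : Fin (N + 1) → ℝ) (hl : ∀ α, 0 < l α) (hlsum : ∑ α, l α = 1)
    (H pa zb : ℝ → ℝ → ℝ) (u : Fin (N + 1) → ℝ → ℝ → ℝ)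
    (hH : ContDiff ℝ 1 fun p : ℝ × ℝ => H p.1 p.2) (hHpos : ∀ x t, 0 < H x t)
    (hu : ∀ α, ContDiff ℝ 1 fun p : ℝ × ℝ => u α p.1 p.2)
    (hpa : ContDiff ℝ 1 fun p : ℝ × ℝ => pa p.1 p.2)
    (hzb : ContDiff ℝ 1 fun p : ℝ × ℝ => zb p.1 p.2)
    (uhalf : ℕ → ℝ → ℝ → ℝ)
    (huhalf : ∀ k, Continuous fun p : ℝ × ℝ => uhalf k p.1 p.2)
    (G : ℕ → ℝ → ℝ → ℝ)
    (hG : ∀ k x t, G k x t =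
      ∑ j ∈ Finset.univ.filter (fun j : Fin (N + 1) => (j : ℕ) < k),
        (deriv (fun τ => l j * H x τ) t + deriv (fun y => l j * H y t * u j y t) x))
    (hcont : ∀ x t, deriv (fun τ => H x τ) t
      + deriv (fun y => ∑ α, l α * H y t * u α y t) x = 0)
    (hmom : ∀ α : Fin (N + 1), ∀ x t,
      deriv (fun τ => l α * H x τ * u α x τ) t
        + deriv (fun y => l α * H y t * (u α y t) ^ 2
            + g / (2 * l α) * (l α * H y t) ^ 2) x
      = -(l α * H x t) * deriv (fun y => pa y t) x
        - g * (l α * H x t) * deriv (fun y => zb y t) x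
        + uhalf ((α : ℕ) + 1) x t * G ((α : ℕ) + 1) x t
        - uhalf (α : ℕ) x t * G (α : ℕ) x t)
    (E : Fin (N + 1) → ℝ → ℝ → ℝ)
    (hE : ∀ α y t, E α y t =
      l α * H y t * (u α y t) ^ 2 / 2
        + g * (l α * H y t) * ((H y t + zb y t) + zb y t) / 2
        + l α * H y t * pa y t)
    (hupwind : ∀ β : Fin N, ∀ x t,
      (0 ≤ G ((β : ℕ) + 1) x t → uhalf ((β : ℕ) + 1) x t = u β.succ x t) ∧
      (G ((β : ℕ) + 1) x t < 0 → uhalf ((β : ℕ) + 1) x t = u β.castSucc x t)) :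
    (∀ x t,
      (∑ β : Fin N,
          G ((β : ℕ) + 1) x t
            * (uhalf ((β : ℕ) + 1) x t - (u β.castSucc x t + u β.succ x t) / 2)
            * (u β.castSucc x t - u β.succ x t))
        = -∑ β : Fin N,
            |G ((β : ℕ) + 1) x t| * (u β.succ x t - u β.castSucc x t) ^ 2 / 2 ∧
      (∑ β : Fin N,
          G ((β : ℕ) + 1) x t
            * (uhalf ((β : ℕ) + 1) x t - (u β.castSucc x t + u β.succ x t) / 2)
            * (u β.castSucc x t - u β.succ x t)) ≤ 0) ∧
    (∀ x t,
      deriv (fun τ => ∑ α, E α x τ) t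
        + deriv (fun y => ∑ α, u α y t * (E α y t + g / 2 * (l α * H y t) * H y t)) x
      ≤ H x t * deriv (fun τ => pa x τ) t
        + g * H x t * deriv (fun τ => zb x τ) t) := by
  have part1eq : ∀ x t,
      (∑ β : Fin N, G ((β : ℕ) + 1) x t
          * (uhalf ((β : ℕ) + 1) x t - (u β.castSucc x t + u β.succ x t) / 2)
          * (u β.castSucc x t - u β.succ x t))
        = -∑ β : Fin N, |G ((β : ℕ) + 1) x t| * (u β.succ x t - u β.castSucc x t) ^ 2 / 2 := by
    intro x t
    rw [← Finset.sum_neg_distrib]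
    refine Finset.sum_congr rfl fun β _ => ?_
    rcases le_or_gt 0 (G ((β : ℕ) + 1) x t) with h | h
    · rw [(hupwind β x t).1 h, abs_of_nonneg h]; ring
    · rw [(hupwind β x t).2 h, abs_of_neg h]; ring
  have part1le : ∀ x t,
      (∑ β : Fin N, G ((β : ℕ) + 1) x t
          * (uhalf ((β : ℕ) + 1) x t - (u β.castSucc x t + u β.succ x t) / 2)
          * (u β.castSucc x t - u β.succ x t)) ≤ 0 := by
    intro x t
    rw [part1eq x t, neg_nonpos]
    exact Finset.sum_nonneg fun β _ => by positivity
  refine ⟨fun x t => ⟨part1eq x t, part1le x t⟩, ?_⟩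
  intro x t
  have dH_t := myslice_t hH x
  have dH_x := myslice_x hH t
  obtain ⟨ct, hct⟩ : ∃ d, HasDerivAt (fun τ => H x τ) d t := ⟨_, (dH_t t).hasDerivAt⟩
  obtain ⟨cx, hcx⟩ : ∃ d, HasDerivAt (fun y => H y t) d x := ⟨_, (dH_x x).hasDerivAt⟩
  obtain ⟨Pt, hPt⟩ : ∃ d, HasDerivAt (fun τ => pa x τ) d t := ⟨_, ((myslice_t hpa x) t).hasDerivAt⟩
  obtain ⟨Px, hPx⟩ : ∃ d, HasDerivAt (fun y => pa y t) d x := ⟨_, ((myslice_x hpa t) x).hasDerivAt⟩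
  obtain ⟨Zt, hZt⟩ : ∃ d, HasDerivAt (fun τ => zb x τ) d t := ⟨_, ((myslice_t hzb x) t).hasDerivAt⟩
  obtain ⟨Zx, hZx⟩ : ∃ d, HasDerivAt (fun y => zb y t) d x := ⟨_, ((myslice_x hzb t) x).hasDerivAt⟩
  obtain ⟨vt, hvt⟩ : ∃ d : Fin (N + 1) → ℝ, ∀ α, HasDerivAt (fun τ => u α x τ) (d α) t :=
    ⟨_, fun α => ((myslice_t (hu α) x) t).hasDerivAt⟩
  obtain ⟨vx, hvx⟩ : ∃ d : Fin (N + 1) → ℝ, ∀ α, HasDerivAt (fun y => u α y t) (d α) x :=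
    ⟨_, fun α => ((myslice_x (hu α) t) x).hasDerivAt⟩
  -- continuity in scalar form
  have hCsum : HasDerivAt (fun y => ∑ α : Fin (N + 1), l α * H y t * u α y t)
      (∑ α : Fin (N + 1), (l α * cx * u α x t + l α * H x t * vx α)) x :=
    HasDerivAt.fun_sum fun α _ => ((hcx.const_mul (l α)).mul (hvx α)).congr_val (by ring)
  have hcont' := hcont x t
  rw [hct.deriv, hCsum.deriv] at hcont'
  -- momentum in scalar form
  have hmom' : ∀ α : Fin (N + 1),
      (l α * ct * u α x t + l α * H x t * vt α)
        + (l α * cx * (u α x t) ^ 2 + l α * H x t * (2 * u α x t * vx α)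
            + g * l α * H x t * cx)
      = -(l α * H x t) * Px - g * (l α * H x t) * Zx
        + uhalf ((α : ℕ) + 1) x t * G ((α : ℕ) + 1) x t
        - uhalf (α : ℕ) x t * G (α : ℕ) x t := by
    intro α
    have h1 : HasDerivAt (fun τ => l α * H x τ * u α x τ)
        (l α * ct * u α x t + l α * H x t * vt α) t :=
      ((hct.const_mul (l α)).mul (hvt α)).congr_val (by ring)
    have h2 : HasDerivAt
        (fun y => l α * H y t * (u α y t) ^ 2 + g / (2 * l α) * (l α * H y t) ^ 2)
        (l α * cx * (u α x t) ^ 2 + l α * H x t * (2 * u α x t * vx α)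
          + g * l α * H x t * cx) x := by
      have h0 : l α ≠ 0 := ne_of_gt (hl α)
      refine (((hcx.const_mul (l α)).mul ((hvx α).fun_pow 2)).add
        (((hcx.const_mul (l α)).fun_pow 2).const_mul (g / (2 * l α)))).congr_val ?_
      field_simp
      ring
    have h3 := hmom α x t
    rw [h1.deriv, h2.deriv, hPx.deriv, hZx.deriv] at h3
    exact h3
  -- G in scalar form
  have hG' : ∀ k, G k x t = ∑ j ∈ Finset.univ.filter (fun j : Fin (N + 1) => (j : ℕ) < k),
      (l j * ct + (l j * cx * u j x t + l j * H x t * vx j)) := by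
    intro k
    rw [hG k x t]
    refine Finset.sum_congr rfl fun j _ => ?_
    have e1 : HasDerivAt (fun τ => l j * H x τ) (l j * ct) t := hct.const_mul (l j)
    have e2 : HasDerivAt (fun y => l j * H y t * u j y t)
        (l j * cx * u j x t + l j * H x t * vx j) x :=
      ((hcx.const_mul (l j)).mul (hvx j)).congr_val (by ring)
    rw [e1.deriv, e2.deriv]
  -- natural-number extensions
  set lN : ℕ → ℝ := fun i => l (i : Fin (N + 1)) with hlN
  set vN : ℕ → ℝ := fun i => u (i : Fin (N + 1)) x t with hvN
  set vtN : ℕ → ℝ := fun i => vt (i : Fin (N + 1)) with hvtN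
  set vxN : ℕ → ℝ := fun i => vx (i : Fin (N + 1)) with hvxN
  have cv : ∀ α : Fin (N + 1), (((α : ℕ) : ℕ) : Fin (N + 1)) = α := fun α =>
    Fin.cast_val_eq_self α
  have cmk : ∀ (i : ℕ) (hi : i < N + 1), ((i : ℕ) : Fin (N + 1)) = ⟨i, hi⟩ := by
    intro i hi; ext; simp [Fin.val_cast_of_lt hi]
  have c1 : ∀ β : Fin N, (((β : ℕ) : ℕ) : Fin (N + 1)) = β.castSucc := by
    intro β; ext; simp [Fin.val_cast_of_lt (Nat.lt_succ_of_lt β.isLt)]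
  have c2 : ∀ β : Fin N, (((β : ℕ) + 1 : ℕ) : Fin (N + 1)) = β.succ := by
    intro β; ext; simp [Fin.val_cast_of_lt (Nat.succ_lt_succ β.isLt)]
  -- abstract hypotheses
  have h_ls : ∑ i ∈ Finset.range (N + 1), lN i = 1 := by
    rw [← Fin.sum_univ_eq_sum_range lN (N + 1), ← hlsum]
    exact Finset.sum_congr rfl fun α _ => by simp [hlN, cv α]
  have h_cn : ct + ∑ i ∈ Finset.range (N + 1),
      (lN i * cx * vN i + lN i * H x t * vxN i) = 0 := by
    rw [← Fin.sum_univ_eq_sum_range (fun i => lN i * cx * vN i + lN i * H x t * vxN i) (N + 1)]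
    have e : ∀ α : Fin (N + 1), lN (α : ℕ) * cx * vN (α : ℕ) + lN (α : ℕ) * H x t * vxN (α : ℕ)
        = l α * cx * u α x t + l α * H x t * vx α := by
      intro α; simp [hlN, hvN, hvxN, cv α]
    rw [Finset.sum_congr rfl fun α _ => e α]
    exact hcont'
  have h_mm : ∀ i < N + 1,
      (lN i * ct * vN i + lN i * H x t * vtN i)
        + (lN i * cx * (vN i) ^ 2 + lN i * H x t * (2 * vN i * vxN i)
            + g * lN i * H x t * cx)
      = -(lN i * H x t) * Px - g * (lN i * H x t) * Zx
        + uhalf (i + 1) x t * G (i + 1) x t - uhalf i x t * G i x t := by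
    intro i hi
    have := hmom' ⟨i, hi⟩
    simpa [hlN, hvN, hvtN, hvxN, cmk i hi] using this
  have h_Gk : ∀ k ≤ N + 1, G k x t = ∑ i ∈ Finset.range k,
      (lN i * ct + (lN i * cx * vN i + lN i * H x t * vxN i)) := by
    intro k hk
    rw [hG' k, Finset.sum_filter]
    have e : ∀ j : Fin (N + 1),
        (if (j : ℕ) < k then (l j * ct + (l j * cx * u j x t + l j * H x t * vx j)) else 0)
        = (fun i : ℕ => if i < k then
            (lN i * ct + (lN i * cx * vN i + lN i * H x t * vxN i)) else 0) (j : ℕ) := by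
      intro j; simp [hlN, hvN, hvxN, cv j]
    rw [Finset.sum_congr rfl fun j _ => e j,
      Fin.sum_univ_eq_sum_range (fun i => if i < k then
        (lN i * ct + (lN i * cx * vN i + lN i * H x t * vxN i)) else 0) (N + 1),
      ← Finset.sum_subset (Finset.range_subset_range.mpr hk)
        (fun i _ hik => if_neg (by simpa using hik))]
    exact Finset.sum_congr rfl fun i hi => if_pos (Finset.mem_range.mp hi)
  have main := abstract_calc N g (H x t) ct cx (pa x t) Pt Px (zb x t) Zt Zx
    lN vN vtN vxN (fun k => uhalf k x t) (fun k => G k x t) h_ls h_cn h_mm h_Gk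
  -- goal derivatives
  have hEt : HasDerivAt (fun τ => ∑ α : Fin (N + 1),
        (l α * H x τ * (u α x τ) ^ 2 / 2
          + g * (l α * H x τ) * ((H x τ + zb x τ) + zb x τ) / 2
          + l α * H x τ * pa x τ))
      (∑ α : Fin (N + 1),
        (l α * ct * (u α x t) ^ 2 / 2 + l α * H x t * u α x t * vt α
          + g * l α * (H x t * ct + ct * zb x t + H x t * Zt)
          + l α * (ct * pa x t + H x t * Pt))) t :=
    HasDerivAt.fun_sum fun α _ =>
      (((((hct.const_mul (l α)).fun_mul ((hvt α).fun_pow 2)).div_const 2).fun_add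
        ((((hct.const_mul (l α)).const_mul g).fun_mul ((hct.fun_add hZt).fun_add hZt)).div_const 2)).fun_add
        ((hct.const_mul (l α)).fun_mul hPt)).congr_val (by ring)
  have hEx : HasDerivAt (fun y => ∑ α : Fin (N + 1),
        u α y t * ((l α * H y t * (u α y t) ^ 2 / 2
          + g * (l α * H y t) * ((H y t + zb y t) + zb y t) / 2
          + l α * H y t * pa y t) + g / 2 * (l α * H y t) * H y t))
      (∑ α : Fin (N + 1),
        (l α * cx * (u α x t) ^ 3 / 2 + 3 / 2 * l α * H x t * (u α x t) ^ 2 * vx α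
          + g * l α * ((cx * u α x t + H x t * vx α) * (H x t + zb x t)
              + H x t * u α x t * (cx + Zx))
          + l α * ((cx * u α x t + H x t * vx α) * pa x t + H x t * u α x t * Px))) x :=
    HasDerivAt.fun_sum fun α _ =>
      ((hvx α).fun_mul ((((((hcx.const_mul (l α)).fun_mul ((hvx α).fun_pow 2)).div_const 2).fun_add
          ((((hcx.const_mul (l α)).const_mul g).fun_mul ((hcx.fun_add hZx).fun_add hZx)).div_const 2)).fun_add
          ((hcx.const_mul (l α)).fun_mul hPx)).fun_add
          (((hcx.const_mul (l α)).const_mul (g / 2)).fun_mul hcx))).congr_val (by ring)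
  have eE : (fun τ => ∑ α : Fin (N + 1), E α x τ) = fun τ => ∑ α : Fin (N + 1),
      (l α * H x τ * (u α x τ) ^ 2 / 2
        + g * (l α * H x τ) * ((H x τ + zb x τ) + zb x τ) / 2
        + l α * H x τ * pa x τ) :=
    funext fun τ => Finset.sum_congr rfl fun α _ => hE α x τ
  have eF : (fun y => ∑ α : Fin (N + 1), u α y t * (E α y t + g / 2 * (l α * H y t) * H y t))
      = fun y => ∑ α : Fin (N + 1),
          u α y t * ((l α * H y t * (u α y t) ^ 2 / 2
            + g * (l α * H y t) * ((H y t + zb y t) + zb y t) / 2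
            + l α * H y t * pa y t) + g / 2 * (l α * H y t) * H y t) :=
    funext fun y => Finset.sum_congr rfl fun α _ => by rw [hE α y t]
  rw [eE, eF, hEt.deriv, hEx.deriv, hPt.deriv, hZt.deriv]
  -- link Fin sums and range sums
  have hTlink : (∑ α : Fin (N + 1),
        (l α * ct * (u α x t) ^ 2 / 2 + l α * H x t * u α x t * vt α
          + g * l α * (H x t * ct + ct * zb x t + H x t * Zt)
          + l α * (ct * pa x t + H x t * Pt)))
      = ∑ i ∈ Finset.range (N + 1),
        (lN i * ct * (vN i) ^ 2 / 2 + lN i * H x t * vN i * vtN i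
          + g * lN i * (H x t * ct + ct * zb x t + H x t * Zt)
          + lN i * (ct * pa x t + H x t * Pt)) := by
    rw [← Fin.sum_univ_eq_sum_range]
    exact Finset.sum_congr rfl fun α _ => by simp [hlN, hvN, hvtN, cv α]
  have hXlink : (∑ α : Fin (N + 1),
        (l α * cx * (u α x t) ^ 3 / 2 + 3 / 2 * l α * H x t * (u α x t) ^ 2 * vx α
          + g * l α * ((cx * u α x t + H x t * vx α) * (H x t + zb x t)
              + H x t * u α x t * (cx + Zx))
          + l α * ((cx * u α x t + H x t * vx α) * pa x t + H x t * u α x t * Px)))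
      = ∑ i ∈ Finset.range (N + 1),
        (lN i * cx * (vN i) ^ 3 / 2 + 3 / 2 * lN i * H x t * (vN i) ^ 2 * vxN i
          + g * lN i * ((cx * vN i + H x t * vxN i) * (H x t + zb x t)
              + H x t * vN i * (cx + Zx))
          + lN i * ((cx * vN i + H x t * vxN i) * pa x t + H x t * vN i * Px)) := by
    rw [← Fin.sum_univ_eq_sum_range]
    exact Finset.sum_congr rfl fun α _ => by simp [hlN, hvN, hvxN, cv α]
  have hSlink : (∑ β ∈ Finset.range N,
        G (β + 1) x t * (uhalf (β + 1) x t - (vN β + vN (β + 1)) / 2)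
          * (vN β - vN (β + 1)))
      = ∑ β : Fin N,
          G ((β : ℕ) + 1) x t
            * (uhalf ((β : ℕ) + 1) x t - (u β.castSucc x t + u β.succ x t) / 2)
            * (u β.castSucc x t - u β.succ x t) := by
    rw [← Fin.sum_univ_eq_sum_range (fun β => G (β + 1) x t
      * (uhalf (β + 1) x t - (vN β + vN (β + 1)) / 2) * (vN β - vN (β + 1))) N]
    exact Finset.sum_congr rfl fun β _ => by simp [hvN, c1 β, c2 β]
  rw [hTlink, hXlink]
  have hfin := part1le x t
  rw [← hSlink] at hfin
  calc _ = H x t * Pt + g * H x t * Zt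
        + ∑ β ∈ Finset.range N,
            G (β + 1) x t * (uhalf (β + 1) x t - (vN β + vN (β + 1)) / 2)
              * (vN β - vN (β + 1)) := main
    _ ≤ H x t * Pt + g * H x t * Zt := by linarith
end

section
/- Consider the kinetic finite-volume scheme for the multilayer Saint-Venant system with hydrostatic reconstruction: for cells indexed by i with topography values z_{b,i}, set z_{b,i+1/2} = max(z_{b,i}, z_{b,i+1}), H_{i+1/2−} = H_i + z_{b,i} − z_{b,i+1/2}, H_{i+1/2+} = H_{i+1} + z_{b,i+1} − z_{b,i+1/2}; the interface fluxes are F_{i+1/2} = F⁺(X_{i+1/2−}) + F⁻(X_{i+1/2+}), where X_{i+1/2−} = (H_{i+1/2−}, (u_{α,i})_α), X_{i+1/2+} = (H_{i+1/2+}, (u_{α,i+1})_α), and the kinetic fluxes have components F^±_{h_α}(H,(u)) = l_α H ∫_{±(u_α+wc)≥0,±} (u_α+wc)χ(w)dw and F^±_{q_α}(H,(u)) = l_α H ∫ (u_α+wc)²χ(w)dw over {w : u_α+wc ≥ 0} for F⁺ and {w : u_α+wc < 0} for F⁻, with c=√(gH/2); the update is H_i^{n+1} = H_i − σ_i(Σ_α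 F_{h_α,i+1/2} − Σ_α F_{h_α,i−1/2}) and q_{α,i}^{n+1} = l_α H_i u_{α,i} − σ_i(F_{q_α,i+1/2} − F_{q_α,i−1/2}) + σ_i·l_α(g/2)((H_{i+1/2−})² − (H_{i−1/2+})²). If the discrete state is a lake at rest, i.e. u_{α,i} = 0 for all α and i and H_i + z_{b,i} = C for a constant C with H_i ≥ 0 for all i, then the scheme leaves the state unchanged: H_i^{n+1} = H_i and q_{α,i}^{n+1} = 0 for all α, i. -/
open MeasureTheory

/-- Positive-part kinetic mass flux `F⁺_{h_α}` of a state with water height `Hh`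
and layer velocity `uα`, built from the Gibbs equilibrium with profile `χ`. -/
noncomputable def kineticFluxHPlus (g : ℝ) (χ : ℝ → ℝ) (lα Hh uα : ℝ) : ℝ :=
  lα * Hh * ∫ w in {w : ℝ | 0 ≤ uα + w * Real.sqrt (g * Hh / 2)},
    (uα + w * Real.sqrt (g * Hh / 2)) * χ w

/-- Negative-part kinetic mass flux `F⁻_{h_α}`. -/
noncomputable def kineticFluxHMinus (g : ℝ) (χ : ℝ → ℝ) (lα Hh uα : ℝ) : ℝ :=
  lα * Hh * ∫ w in {w : ℝ | uα + w * Real.sqrt (g * Hh / 2) < 0},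
    (uα + w * Real.sqrt (g * Hh / 2)) * χ w

/-- Positive-part kinetic momentum flux `F⁺_{q_α}`. -/
noncomputable def kineticFluxQPlus (g : ℝ) (χ : ℝ → ℝ) (lα Hh uα : ℝ) : ℝ :=
  lα * Hh * ∫ w in {w : ℝ | 0 ≤ uα + w * Real.sqrt (g * Hh / 2)},
    (uα + w * Real.sqrt (g * Hh / 2)) ^ 2 * χ w

/-- Negative-part kinetic momentum flux `F⁻_{q_α}`. -/
noncomputable def kineticFluxQMinus (g : ℝ) (χ : ℝ → ℝ) (lα Hh uα : ℝ) : ℝ :=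
  lα * Hh * ∫ w in {w : ℝ | uα + w * Real.sqrt (g * Hh / 2) < 0},
    (uα + w * Real.sqrt (g * Hh / 2)) ^ 2 * χ w


lemma aux_int (χ : ℝ → ℝ) (hχint : Integrable χ) (hχsupp : HasCompactSupport χ)
    (n : ℕ) : Integrable (fun w => w ^ n * χ w) := by
  obtain ⟨R, hR⟩ := hχsupp.isCompact.isBounded.exists_norm_le
  set M := max R 0 with hM
  refine Integrable.mono (hχint.const_mul (M ^ n)) ?_ ?_
  · exact (measurable_id.pow_const n).aestronglyMeasurable.mul hχint.aestronglyMeasurable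
  · refine Filter.Eventually.of_forall fun w => ?_
    by_cases hw : w ∈ tsupport χ
    · have h1 : |w| ≤ M := le_trans (hR w hw) (le_max_left _ _)
      have h2 : 0 ≤ M := le_max_right _ _
      have h3 : |w| ^ n ≤ M ^ n := pow_le_pow_left₀ (abs_nonneg _) h1 n
      calc ‖w ^ n * χ w‖ = |w| ^ n * |χ w| := by
            rw [Real.norm_eq_abs, abs_mul, abs_pow]
        _ ≤ M ^ n * |χ w| :=
            mul_le_mul_of_nonneg_right h3 (abs_nonneg _)
        _ ≤ |M ^ n| * |χ w| := by
            rw [abs_of_nonneg (pow_nonneg h2 n)]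
        _ = |M ^ n * χ w| := (abs_mul _ _).symm
        _ = ‖M ^ n * χ w‖ := (Real.norm_eq_abs _).symm
    · simp [image_eq_zero_of_notMem_tsupport hw]

lemma aux_odd_s15 (χ : ℝ → ℝ) (hχeven : ∀ w, χ (-w) = χ w) :
    (∫ w, w * χ w) = 0 := by
  have A : MeasurableEmbedding (fun x : ℝ => -x) :=
    (Homeomorph.neg ℝ).isClosedEmbedding.measurableEmbedding
  have h : (∫ w, w * χ w) = ∫ w, (-w) * χ (-w) := by
    conv_lhs => rw [← Measure.map_neg_eq_self (volume : Measure ℝ)]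
    rw [A.integral_map]
  simp only [hχeven, neg_mul] at h
  rw [integral_neg] at h
  linarith

lemma aux_split (f : ℝ → ℝ) (hf : Integrable f) (c : ℝ) :
    (∫ w in {w : ℝ | 0 ≤ w * c}, f w) + (∫ w in {w : ℝ | w * c < 0}, f w)
      = ∫ w, f w := by
  have hs : MeasurableSet {w : ℝ | 0 ≤ w * c} :=
    measurableSet_le measurable_const (measurable_id.mul_const c)
  have hc : {w : ℝ | w * c < 0} = {w : ℝ | 0 ≤ w * c}ᶜ := by
    ext w; simp [not_le]
  rw [hc]
  exact integral_add_compl hs hf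

lemma flux_h (g : ℝ) (χ : ℝ → ℝ) (hχint : Integrable χ) (hχsupp : HasCompactSupport χ)
    (hχeven : ∀ w, χ (-w) = χ w) (lα Hh : ℝ) :
    kineticFluxHPlus g χ lα Hh 0 + kineticFluxHMinus g χ lα Hh 0 = 0 := by
  set c := Real.sqrt (g * Hh / 2) with hc
  have hint : Integrable (fun w => w * c * χ w) := by
    have := (aux_int χ hχint hχsupp 1).const_mul c
    refine this.congr (Filter.Eventually.of_forall fun w => ?_)
    simp; ring
  unfold kineticFluxHPlus kineticFluxHMinus
  simp only [zero_add, ← hc, ← mul_add]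
  rw [aux_split _ hint c]
  have : (∫ w, w * c * χ w) = c * ∫ w, w * χ w := by
    rw [← MeasureTheory.integral_const_mul]
    congr 1; funext w; ring
  rw [this, aux_odd_s15 χ hχeven]
  ring

lemma flux_q (g : ℝ) (χ : ℝ → ℝ) (hχint : Integrable χ) (hχsupp : HasCompactSupport χ)
    (hχ2 : (∫ w, w ^ 2 * χ w) = 1) (lα Hh : ℝ) (hHh : 0 ≤ g * Hh / 2) :
    kineticFluxQPlus g χ lα Hh 0 + kineticFluxQMinus g χ lα Hh 0
      = lα * Hh * (g * Hh / 2) := by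
  set c := Real.sqrt (g * Hh / 2) with hc
  have hint : Integrable (fun w => (w * c) ^ 2 * χ w) := by
    have := (aux_int χ hχint hχsupp 2).const_mul (c ^ 2)
    refine this.congr (Filter.Eventually.of_forall fun w => ?_)
    simp; ring
  unfold kineticFluxQPlus kineticFluxQMinus
  simp only [zero_add, ← hc, ← mul_add]
  rw [aux_split _ hint c]
  have h1 : (∫ w, (w * c) ^ 2 * χ w) = c ^ 2 * ∫ w, w ^ 2 * χ w := by
    rw [← MeasureTheory.integral_const_mul]
    congr 1; funext w; ring
  rw [h1, hχ2, hc, Real.sq_sqrt hHh]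
  ring
/-- The kinetic finite-volume scheme for the multilayer Saint-Venant system
with hydrostatic reconstruction preserves the lake-at-rest steady states:
if `u_{α,i} = 0` and `H_i + z_{b,i} = C` with `H_i ≥ 0` for all cells `i`,
then the updated state is unchanged. -/
theorem multilayer_scheme_well_balanced
    (N : ℕ) (hN : 1 ≤ N) (g : ℝ) (hg : 0 < g)
    (l : Fin N → ℝ) (hl : ∀ α, 0 < l α) (hlsum : ∑ α, l α = 1)
    (σ : ℤ → ℝ) (hσ : ∀ i, 0 < σ i)
    (χ : ℝ → ℝ) (hχint : Integrable χ) (hχsupp : HasCompactSupport χ)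
    (hχeven : ∀ w, χ (-w) = χ w) (hχpos : ∀ w, 0 ≤ χ w)
    (hχ0 : (∫ w, χ w) = 1) (hχ2 : (∫ w, w ^ 2 * χ w) = 1)
    (zb H : ℤ → ℝ) (u : Fin N → ℤ → ℝ) (C : ℝ)
    (hrest : ∀ α i, u α i = 0)
    (hlake : ∀ i, H i + zb i = C)
    (hHpos : ∀ i, 0 ≤ H i)
    -- hydrostatic reconstruction at the interface i+1/2
    (zbh Hm Hp : ℤ → ℝ)
    (hzbh : ∀ i, zbh i = max (zb i) (zb (i + 1)))
    (hHm : ∀ i, Hm i = H i + zb i - zbh i)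
    (hHp : ∀ i, Hp i = H (i + 1) + zb (i + 1) - zbh i)
    -- numerical fluxes at the interface i+1/2
    (Fh Fq : Fin N → ℤ → ℝ)
    (hFh : ∀ α i, Fh α i =
      kineticFluxHPlus g χ (l α) (Hm i) (u α i)
        + kineticFluxHMinus g χ (l α) (Hp i) (u α (i + 1)))
    (hFq : ∀ α i, Fq α i =
      kineticFluxQPlus g χ (l α) (Hm i) (u α i)
        + kineticFluxQMinus g χ (l α) (Hp i) (u α (i + 1)))
    -- updated state
    (Hnew : ℤ → ℝ) (qnew : Fin N → ℤ → ℝ)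
    (hHnew : ∀ i, Hnew i =
      H i - σ i * ((∑ α, Fh α i) - ∑ α, Fh α (i - 1)))
    (hqnew : ∀ α i, qnew α i =
      l α * H i * u α i - σ i * (Fq α i - Fq α (i - 1))
        + σ i * (l α * (g / 2 * (Hm i) ^ 2 - g / 2 * (Hp (i - 1)) ^ 2))) :
    (∀ i, Hnew i = H i) ∧ (∀ α i, qnew α i = 0) := by
  have hpq : ∀ i, Hp i = Hm i := by
    intro i
    have h1 := hlake i
    have h2 := hlake (i + 1)
    rw [hHp, hHm]
    linarith
  have hMnonneg : ∀ i, 0 ≤ Hm i := by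
    intro i
    have h1 := hlake i
    have h2 := hlake (i + 1)
    have h3 := hHpos i
    have h4 := hHpos (i + 1)
    rw [hHm, hzbh]
    rcases le_total (zb i) (zb (i + 1)) with h | h
    · rw [max_eq_right h]; linarith
    · rw [max_eq_left h]; linarith
  have hFh0 : ∀ α i, Fh α i = 0 := by
    intro α i
    rw [hFh, hrest, hrest, hpq i]
    exact flux_h g χ hχint hχsupp hχeven _ _
  have hFqv : ∀ α i, Fq α i = l α * (g / 2 * (Hm i) ^ 2) := by
    intro α i
    have hh : 0 ≤ g * Hm i / 2 := by
      have := hMnonneg i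
      positivity
    rw [hFq, hrest, hrest, hpq i, flux_q g χ hχint hχsupp hχ2 _ _ hh]
    ring
  constructor
  · intro i
    rw [hHnew]
    simp [hFh0]
  · intro α i
    rw [hqnew, hrest, hFqv, hFqv, hpq (i - 1)]
    ring
end

section
/- Consider the kinetic finite-volume scheme for the homogeneous multilayer Saint-Venant system on cells i∈ℤ with sizes Δx_i>0: given states H_i^n ≥ 0 and u_{α,i}^n, set c_i^n = √(gH_i^n/2), define the layer mass fluxes F_{h_α,i+1/2} = F⁺_{h_α}(X_i^n) + F⁻_{h_α}(X_{i+1}^n) with F⁺_{h_α}(X) = l_α H ∫_{u_α+wc≥0}(u_α+wc)χ(w)dw and F⁻_{h_α}(X) = l_α H ∫_{u_α+wc<0}(u_α+wc)χ(w)dw, set 𝓕_{h_α,i} = F_{h_α,i+1/2} − F_{h_α,i−1/2}, update H_i^{n+1} = H_i^n − (Δtⁿ/Δx_i)Σ_{α=1}^N 𝓕_{h_α,i}, and define the discrete exchange terms G_{α+1/2,i} = (1/Δx_i)Σ_{j=1}^{α}(𝓕_{h_j,i} − l_j Σ_{p=1}^N 𝓕_{h_p,i}) for α=1,…,N−1 with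 G_{1/2,i} = G_{N+1/2,i} = 0. If χ is supported in [−w_M,w_M] and the time step satisfies the CFL condition Δtⁿ·( l_α H_i^n(|u_{α,i}^n| + w_M c_i^n)/Δx_i + [G_{α+1/2,i}]_− + [G_{α−1/2,i}]_+ ) ≤ l_α H_i^n for every layer α and every cell i (where [x]_+ = max(0,x) and [x]_− = max(0,−x)), then the scheme preserves nonnegativity of the water height: H_i^{n+1} ≥ 0 for all i. -/
open MeasureTheory

lemma abs_integrand_le (χ : ℝ → ℝ) (hχpos : ∀ w, 0 ≤ χ w)
    (wM : ℝ) (hχM : ∀ w, χ w ≠ 0 → |w| ≤ wM) (u c : ℝ) (hc : 0 ≤ c) (w : ℝ) :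
    |(u + w * c) * χ w| ≤ (|u| + wM * c) * χ w := by
  rcases eq_or_ne (χ w) 0 with h | h
  · simp [h]
  · have hw := hχM w h
    rw [abs_mul, abs_of_nonneg (hχpos w)]
    have h1 : |u + w * c| ≤ |u| + wM * c := by
      calc |u + w * c| ≤ |u| + |w * c| := abs_add_le _ _
        _ = |u| + |w| * c := by rw [abs_mul, abs_of_nonneg hc]
        _ ≤ |u| + wM * c := by nlinarith [abs_nonneg w]
    exact mul_le_mul_of_nonneg_right h1 (hχpos w)

lemma f_integrable (χ : ℝ → ℝ) (hχint : Integrable χ) (hχpos : ∀ w, 0 ≤ χ w)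
    (wM : ℝ) (hχM : ∀ w, χ w ≠ 0 → |w| ≤ wM) (u c : ℝ) (hc : 0 ≤ c) :
    Integrable (fun w => (u + w * c) * χ w) := by
  apply Integrable.mono' (hχint.const_mul (|u| + wM * c))
  · exact ((continuous_const.add (continuous_id.mul continuous_const)).aestronglyMeasurable).mul
      hχint.aestronglyMeasurable
  · filter_upwards with w
    exact abs_integrand_le χ hχpos wM hχM u c hc w


lemma fluxPlus_nonneg (g : ℝ) (χ : ℝ → ℝ) (hχpos : ∀ w, 0 ≤ χ w)
    (lα Hh uα : ℝ) (hl : 0 ≤ lα) (hH : 0 ≤ Hh) :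
    0 ≤ kineticFluxHPlus g χ lα Hh uα := by
  unfold kineticFluxHPlus
  have hS : MeasurableSet {w : ℝ | 0 ≤ uα + w * Real.sqrt (g * Hh / 2)} :=
    measurableSet_le measurable_const (measurable_const.add (measurable_id.mul measurable_const))
  refine mul_nonneg (mul_nonneg hl hH) (setIntegral_nonneg hS fun w hw => ?_)
  exact mul_nonneg hw (hχpos w)

lemma fluxMinus_nonpos (g : ℝ) (χ : ℝ → ℝ) (hχpos : ∀ w, 0 ≤ χ w)
    (lα Hh uα : ℝ) (hl : 0 ≤ lα) (hH : 0 ≤ Hh) :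
    kineticFluxHMinus g χ lα Hh uα ≤ 0 := by
  unfold kineticFluxHMinus
  have hS : MeasurableSet {w : ℝ | uα + w * Real.sqrt (g * Hh / 2) < 0} :=
    measurableSet_lt (measurable_const.add (measurable_id.mul measurable_const)) measurable_const
  have hint : (∫ w in {w : ℝ | uα + w * Real.sqrt (g * Hh / 2) < 0},
      (uα + w * Real.sqrt (g * Hh / 2)) * χ w) ≤ 0 := by
    apply setIntegral_nonpos hS
    intro w hw
    exact mul_nonpos_iff.mpr (Or.inr ⟨le_of_lt hw, hχpos w⟩)
  exact mul_nonpos_of_nonneg_of_nonpos (mul_nonneg hl hH) hint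

lemma flux_diff_le (g : ℝ) (χ : ℝ → ℝ) (hχint : Integrable χ)
    (hχpos : ∀ w, 0 ≤ χ w) (hχ0 : (∫ w, χ w) = 1)
    (wM : ℝ) (hχM : ∀ w, χ w ≠ 0 → |w| ≤ wM)
    (lα Hh uα : ℝ) (hl : 0 ≤ lα) (hH : 0 ≤ Hh) :
    kineticFluxHPlus g χ lα Hh uα - kineticFluxHMinus g χ lα Hh uα
      ≤ lα * Hh * (|uα| + wM * Real.sqrt (g * Hh / 2)) := by
  unfold kineticFluxHPlus kineticFluxHMinus
  set c := Real.sqrt (g * Hh / 2) with hcdef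
  have hc : 0 ≤ c := Real.sqrt_nonneg _
  set f : ℝ → ℝ := fun w => (uα + w * c) * χ w with hfdef
  have hf : Integrable f := f_integrable χ hχint hχpos wM hχM uα c hc
  have hS : MeasurableSet {w : ℝ | 0 ≤ uα + w * c} :=
    measurableSet_le measurable_const (measurable_const.add (measurable_id.mul measurable_const))
  have hcompl : {w : ℝ | uα + w * c < 0} = {w : ℝ | 0 ≤ uα + w * c}ᶜ := by
    ext w; simp [not_le]
  rw [hcompl]
  have h1 : (∫ w in {w : ℝ | 0 ≤ uα + w * c}, f w)
      ≤ ∫ w in {w : ℝ | 0 ≤ uα + w * c}, |f w| :=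
    setIntegral_mono hf.integrableOn hf.abs.integrableOn fun w => le_abs_self _
  have h2 : -(∫ w in {w : ℝ | 0 ≤ uα + w * c}ᶜ, f w)
      ≤ ∫ w in {w : ℝ | 0 ≤ uα + w * c}ᶜ, |f w| := by
    rw [← integral_neg]
    exact setIntegral_mono hf.neg.integrableOn hf.abs.integrableOn fun w => neg_le_abs _
  have h3 : (∫ w in {w : ℝ | 0 ≤ uα + w * c}, |f w|)
      + ∫ w in {w : ℝ | 0 ≤ uα + w * c}ᶜ, |f w| = ∫ w, |f w| :=
    integral_add_compl hS hf.abs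
  have h4 : (∫ w, |f w|) ≤ |uα| + wM * c := by
    calc (∫ w, |f w|) ≤ ∫ w, (|uα| + wM * c) * χ w :=
          integral_mono hf.abs (hχint.const_mul _)
            (fun w => abs_integrand_le χ hχpos wM hχM uα c hc w)
      _ = (|uα| + wM * c) * ∫ w, χ w := integral_const_mul _ _
      _ = |uα| + wM * c := by rw [hχ0]; ring
  have hAB : (∫ w in {w : ℝ | 0 ≤ uα + w * c}, f w)
      - (∫ w in {w : ℝ | 0 ≤ uα + w * c}ᶜ, f w) ≤ |uα| + wM * c := by linarith
  calc lα * Hh * (∫ w in {w : ℝ | 0 ≤ uα + w * c}, f w)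
        - lα * Hh * (∫ w in {w : ℝ | 0 ≤ uα + w * c}ᶜ, f w)
      = lα * Hh * ((∫ w in {w : ℝ | 0 ≤ uα + w * c}, f w)
        - (∫ w in {w : ℝ | 0 ≤ uα + w * c}ᶜ, f w)) := by ring
    _ ≤ lα * Hh * (|uα| + wM * c) := by
        exact mul_le_mul_of_nonneg_left hAB (mul_nonneg hl hH)

/-- Under the CFL condition taking into account both the horizontal kinetic
fluxes and the vertical mass exchanges, the kinetic finite-volume scheme for
the homogeneous multilayer Saint-Venant system keeps the water height
nonnegative. Layers are 0-based: layer `α : Fin N` has lower interface `α` and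
upper interface `α + 1`, with discrete exchange terms `G k i`. -/
theorem multilayer_scheme_positivity
    (N : ℕ) (hN : 1 ≤ N) (g : ℝ) (hg : 0 < g)
    (l : Fin N → ℝ) (hl : ∀ α, 0 < l α) (hlsum : ∑ α, l α = 1)
    (χ : ℝ → ℝ) (hχint : Integrable χ)
    (hχeven : ∀ w, χ (-w) = χ w) (hχpos : ∀ w, 0 ≤ χ w)
    (hχ0 : (∫ w, χ w) = 1) (hχ2 : (∫ w, w ^ 2 * χ w) = 1)
    (wM : ℝ) (hwM : 0 ≤ wM)
    (hχM : ∀ w, χ w ≠ 0 → |w| ≤ wM)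
    (Δt : ℝ) (hΔt : 0 < Δt) (Δx : ℤ → ℝ) (hΔx : ∀ i, 0 < Δx i)
    (H : ℤ → ℝ) (u : Fin N → ℤ → ℝ)
    (hHpos : ∀ i, 0 ≤ H i)
    -- numerical mass fluxes at the interfaces i+1/2 and their differences
    (Fh : Fin N → ℤ → ℝ) (𝓕 : Fin N → ℤ → ℝ)
    (hFh : ∀ α i, Fh α i =
      kineticFluxHPlus g χ (l α) (H i) (u α i)
        + kineticFluxHMinus g χ (l α) (H (i + 1)) (u α (i + 1)))
    (h𝓕 : ∀ α i, 𝓕 α i = Fh α i - Fh α (i - 1))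
    -- discrete mass-exchange terms
    (G : ℕ → ℤ → ℝ)
    (hG : ∀ k i, G k i = (1 / Δx i) *
      ∑ j ∈ Finset.univ.filter (fun j : Fin N => (j : ℕ) < k),
        (𝓕 j i - l j * ∑ p, 𝓕 p i))
    -- updated water height
    (Hnew : ℤ → ℝ)
    (hHnew : ∀ i, Hnew i = H i - Δt / Δx i * ∑ α, 𝓕 α i)
    -- CFL condition
    (hCFL : ∀ (α : Fin N) (i : ℤ),
      Δt * (l α * H i * (|u α i| + wM * Real.sqrt (g * H i / 2)) / Δx i
          + max 0 (-(G ((α : ℕ) + 1) i)) + max 0 (G (α : ℕ) i))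
        ≤ l α * H i) :
    ∀ i, 0 ≤ Hnew i := by

  intro i
  have key : ∀ α : Fin N,
      0 ≤ l α * H i - Δt / Δx i * 𝓕 α i + Δt * (G ((α : ℕ) + 1) i - G (α : ℕ) i) := by
    intro α
    have hc : 0 ≤ Real.sqrt (g * H i / 2) := Real.sqrt_nonneg _
    have hlα := (hl α).le
    have h1 : 0 ≤ kineticFluxHPlus g χ (l α) (H (i - 1)) (u α (i - 1)) :=
      fluxPlus_nonneg g χ hχpos _ _ _ hlα (hHpos _)
    have h2 : kineticFluxHMinus g χ (l α) (H (i + 1)) (u α (i + 1)) ≤ 0 :=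
      fluxMinus_nonpos g χ hχpos _ _ _ hlα (hHpos _)
    have h3 : kineticFluxHPlus g χ (l α) (H i) (u α i)
        - kineticFluxHMinus g χ (l α) (H i) (u α i)
        ≤ l α * H i * (|u α i| + wM * Real.sqrt (g * H i / 2)) :=
      flux_diff_le g χ hχint hχpos hχ0 wM hχM _ _ _ hlα (hHpos _)
    have hi1 : i - 1 + 1 = i := by ring
    have h𝓕i : 𝓕 α i = kineticFluxHPlus g χ (l α) (H i) (u α i)
        + kineticFluxHMinus g χ (l α) (H (i + 1)) (u α (i + 1))
        - (kineticFluxHPlus g χ (l α) (H (i - 1)) (u α (i - 1))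
          + kineticFluxHMinus g χ (l α) (H i) (u α i)) := by
      rw [h𝓕, hFh, hFh, hi1]
    have hbound : 𝓕 α i ≤ l α * H i * (|u α i| + wM * Real.sqrt (g * H i / 2)) := by
      rw [h𝓕i]; linarith
    have hΔx' := hΔx i
    have step : Δt / Δx i * 𝓕 α i
        ≤ Δt * (l α * H i * (|u α i| + wM * Real.sqrt (g * H i / 2)) / Δx i) := by
      have h := mul_le_mul_of_nonneg_left hbound
        (le_of_lt (div_pos hΔt hΔx'))
      calc Δt / Δx i * 𝓕 α i
          ≤ Δt / Δx i * (l α * H i * (|u α i| + wM * Real.sqrt (g * H i / 2))) := h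
        _ = Δt * (l α * H i * (|u α i| + wM * Real.sqrt (g * H i / 2)) / Δx i) := by
            ring
    have hG1 : -(G ((α : ℕ) + 1) i) ≤ max 0 (-(G ((α : ℕ) + 1) i)) := le_max_right _ _
    have hG2 : G (α : ℕ) i ≤ max 0 (G (α : ℕ) i) := le_max_right _ _
    have e1 : Δt * (-(G ((α : ℕ) + 1) i)) ≤ Δt * max 0 (-(G ((α : ℕ) + 1) i)) :=
      mul_le_mul_of_nonneg_left hG1 hΔt.le
    have e2 : Δt * G (α : ℕ) i ≤ Δt * max 0 (G (α : ℕ) i) :=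
      mul_le_mul_of_nonneg_left hG2 hΔt.le
    have hcfl := hCFL α i
    rw [mul_add, mul_add] at hcfl
    have e1' : Δt * (-(G ((α : ℕ) + 1) i)) = -(Δt * G ((α : ℕ) + 1) i) := by ring
    rw [e1'] at e1
    linarith
  have hG0 : G 0 i = 0 := by rw [hG]; simp
  have hGN : G N i = 0 := by
    rw [hG]
    have huniv : Finset.univ.filter (fun j : Fin N => (j : ℕ) < N) = Finset.univ := by
      ext j; simp [j.isLt]
    rw [huniv, Finset.sum_sub_distrib, ← Finset.sum_mul, hlsum]
    ring
  have htel : ∑ α : Fin N, (G ((α : ℕ) + 1) i - G (α : ℕ) i) = 0 := by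
    rw [Fin.sum_univ_eq_sum_range (fun k => G (k + 1) i - G k i) N,
      Finset.sum_range_sub (fun k => G k i), hGN, hG0, sub_zero]
  have hsum : Hnew i = ∑ α : Fin N,
      (l α * H i - Δt / Δx i * 𝓕 α i + Δt * (G ((α : ℕ) + 1) i - G (α : ℕ) i)) := by
    rw [hHnew, Finset.sum_add_distrib, Finset.sum_sub_distrib, ← Finset.sum_mul, hlsum,
      ← Finset.mul_sum, ← Finset.mul_sum, htel, mul_zero, add_zero, one_mul]
  rw [hsum]
  exact Finset.sum_nonneg fun α _ => key α
end
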